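/- arXiv:1206.5082 — 8 statements merged into one kernel-verified Lean document; each statement's English description precedes it below -/
import Mathlib

section
/- For every finite simple graph G, the clique number of its edge-clique graph satisfies ω(K_e(G)) = C(ω(G), 2), the binomial coefficient 'ω(G) choose 2', where ω denotes the clique number. -/
namespace ECG

/-- The edge-clique graph `K_e(G)`: its vertices are the edges of `G`, and two distinct
edges are adjacent exactly when all their endpoints are pairwise adjacent in `G`
(i.e. the two edges lie in a common clique of `G`). -/
def edgeCliqueGraph {V : Type*} (G : SimpleGraph V) : SimpleGraph G.edgeSet where
  Adj e f := e ≠ f ∧ G.IsClique {v | v ∈ (e : Sym2 V) ∨ v ∈ (f : Sym2 V)}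
  symm := ⟨by
    rintro e f ⟨hne, hcl⟩
    refine ⟨hne.symm, ?_⟩
    have h : {v | v ∈ (f : Sym2 V) ∨ v ∈ (e : Sym2 V)} =
        {v | v ∈ (e : Sym2 V) ∨ v ∈ (f : Sym2 V)} := by
      ext v; exact or_comm
    rw [h]; exact hcl⟩
  loopless := ⟨fun e h => h.1 rfl⟩

/-- A set of vertices is independent when no two of its members are adjacent. -/
def IsIndepSet {V : Type*} (G : SimpleGraph V) (S : Set V) : Prop :=
  S.Pairwise fun a b => ¬ G.Adj a b

/-- The independence number `α(G)`: the maximum cardinality of an independent set. -/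
noncomputable def indepNum {V : Type*} (G : SimpleGraph V) : ℕ :=
  sSup {n | ∃ S : Finset V, IsIndepSet G ↑S ∧ S.card = n}

end ECG

section Aux

variable {V : Type*}

open Classical in
/-- The finset of endpoints of an element of `Sym2 V`. -/
noncomputable def sym2Fin (z : Sym2 V) : Finset V :=
  Quot.liftOn z (fun p => {p.1, p.2}) (by
    rintro ⟨a, b⟩ ⟨c, d⟩ h
    cases h with
    | refl => rfl
    | swap => exact Finset.pair_comm a b)

lemma mem_sym2Fin {z : Sym2 V} {v : V} : v ∈ sym2Fin z ↔ v ∈ z := by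
  induction z using Sym2.ind with
  | _ a b =>
    unfold sym2Fin
    rw [Sym2.mem_iff]
    simp [Quot.liftOn]

lemma sym2Fin_mk [DecidableEq V] (a b : V) : sym2Fin s(a, b) = {a, b} := by
  ext v
  rw [mem_sym2Fin, Sym2.mem_iff, Finset.mem_insert, Finset.mem_singleton]

lemma sym2Fin_inj {z w : Sym2 V} (h : sym2Fin z = sym2Fin w) : z = w := by
  apply Sym2.ext
  intro x
  rw [← mem_sym2Fin, ← mem_sym2Fin, h]

lemma card_sym2Fin {G : SimpleGraph V} (e : G.edgeSet) :
    (sym2Fin (e : Sym2 V)).card = 2 := by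
  classical
  obtain ⟨z, hz⟩ := e
  induction z using Sym2.ind with
  | _ a b =>
    have hab : a ≠ b := (G.mem_edgeSet.mp hz).ne
    rw [sym2Fin_mk, Finset.card_pair hab]

end Aux

/-- For every finite simple graph `G`, the clique number of its edge-clique
graph satisfies `ω(K_e(G)) = (ω(G)).choose 2`. -/
theorem cliqueNum_edgeCliqueGraph {V : Type*} [Fintype V] (G : SimpleGraph V) :
    (ECG.edgeCliqueGraph G).cliqueNum = (G.cliqueNum).choose 2 := by
  classical
  haveI : Fintype G.edgeSet := Fintype.ofFinite _
  apply le_antisymm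
  · -- upper bound
    refine csSup_le ⟨0, ∅, by simp [SimpleGraph.isNClique_empty]⟩ ?_
    rintro m ⟨s, hs⟩
    set T : Finset V := s.sup (fun e => sym2Fin (e : Sym2 V)) with hT
    have hmemT : ∀ e ∈ s, ∀ v ∈ (e : Sym2 V), v ∈ T := fun e he v hv =>
      Finset.le_sup (f := fun e : G.edgeSet => sym2Fin (e : Sym2 V)) he
        (mem_sym2Fin.mpr hv)
    have hTclique : G.IsClique ↑T := by
      intro u hu v hv huv
      rw [Finset.mem_coe, Finset.mem_sup] at hu hv
      obtain ⟨e, he, hue⟩ := hu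
      obtain ⟨f, hf, hvf⟩ := hv
      rw [mem_sym2Fin] at hue hvf
      by_cases hef : e = f
      · subst hef
        have heq := (Sym2.mem_and_mem_iff huv).mp ⟨hue, hvf⟩
        have he2 := e.2
        rw [heq] at he2
        exact G.mem_edgeSet.mp he2
      · exact (hs.isClique he hf hef).2 (Or.inl hue) (Or.inr hvf) huv
    have hTcard : T.card ≤ G.cliqueNum :=
      SimpleGraph.IsClique.card_le_cliqueNum (tc := hTclique)
    have hcard : m ≤ T.card.choose 2 := by
      rw [← hs.card_eq, ← Finset.card_powersetCard]
      apply Finset.card_le_card_of_injOn (f := fun e : G.edgeSet => sym2Fin (e : Sym2 V))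
      · intro e he
        rw [Finset.mem_coe, Finset.mem_powersetCard]
        exact ⟨fun v hv => hmemT e he v (mem_sym2Fin.mp hv), card_sym2Fin e⟩
      · intro e _ f _ h
        exact Subtype.ext (sym2Fin_inj h)
    exact hcard.trans (Nat.choose_le_choose 2 hTcard)
  · -- lower bound
    obtain ⟨s, hs⟩ := G.exists_isNClique_cliqueNum
    set t : Finset G.edgeSet :=
      Finset.univ.filter (fun e => sym2Fin (e : Sym2 V) ⊆ s) with ht
    have hmem : ∀ e : G.edgeSet, e ∈ t ↔ sym2Fin (e : Sym2 V) ⊆ s := by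
      intro e; simp [ht]
    have htclique : (ECG.edgeCliqueGraph G).IsClique ↑t := by
      intro e he f hf hef
      rw [Finset.mem_coe, hmem] at he hf
      refine ⟨hef, hs.isClique.subset ?_⟩
      rintro v (hv | hv)
      · exact he (mem_sym2Fin.mpr hv)
      · exact hf (mem_sym2Fin.mpr hv)
    have htcard : t.card = G.cliqueNum.choose 2 := by
      rw [← hs.card_eq, ← Finset.card_powersetCard]
      apply Finset.card_bij (i := fun (e : G.edgeSet) _ => sym2Fin (e : Sym2 V))
      · intro e he
        rw [Finset.mem_powersetCard]
        exact ⟨(hmem e).mp he, card_sym2Fin e⟩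
      · intro e _ f _ h
        exact Subtype.ext (sym2Fin_inj h)
      · intro p hp
        rw [Finset.mem_powersetCard] at hp
        obtain ⟨a, b, hab, rfl⟩ := Finset.card_eq_two.mp hp.2
        have ha : a ∈ s := hp.1 (Finset.mem_insert_self _ _)
        have hb : b ∈ s := hp.1 (Finset.mem_insert.mpr (Or.inr (Finset.mem_singleton_self _)))
        have hadj : G.Adj a b := hs.isClique ha hb hab
        refine ⟨⟨s(a, b), G.mem_edgeSet.mpr hadj⟩, ?_, ?_⟩
        · rw [hmem]
          show sym2Fin s(a, b) ⊆ s
          rw [sym2Fin_mk]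
          exact hp.1
        · show ({a, b} : Finset V) = sym2Fin s(a, b)
          rw [sym2Fin_mk]
    calc G.cliqueNum.choose 2 = t.card := htcard.symm
      _ ≤ (ECG.edgeCliqueGraph G).cliqueNum :=
        SimpleGraph.IsClique.card_le_cliqueNum (tc := htclique)
end

section
/- For every finite simple graph G, the edge-clique cover number θ_e(G) equals the vertex-clique cover number κ(K_e(G)) of the edge-clique graph, i.e. the minimum number of cliques of G needed to cover all edges of G equals the minimum number of cliques of K_e(G) needed to cover all vertices of K_e(G). -/
namespace ECG

/-- The edge-clique cover number `θ_e(G)`: the minimum cardinality of a family of cliques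
of `G` such that every edge of `G` has both of its endpoints in some member of the family. -/
noncomputable def edgeCliqueCoverNum {V : Type*} (G : SimpleGraph V) : ℕ :=
  sInf {n | ∃ F : Finset (Set V), F.card = n ∧ (∀ C ∈ F, G.IsClique C) ∧
    ∀ e ∈ G.edgeSet, ∃ C ∈ F, ∀ v ∈ e, v ∈ C}

/-- The vertex-clique cover number `κ(G)`: the minimum number of cliques of `G` whose
union is the whole vertex set. -/
noncomputable def cliqueCoverNum {V : Type*} (G : SimpleGraph V) : ℕ :=
  sInf {n | ∃ F : Finset (Set V), F.card = n ∧ (∀ C ∈ F, G.IsClique C) ∧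
    ∀ v : V, ∃ C ∈ F, v ∈ C}

end ECG

lemma adj_of_mem_edge {V : Type*} (G : SimpleGraph V) {e : Sym2 V} (he : e ∈ G.edgeSet)
    {a b : V} (ha : a ∈ e) (hb : b ∈ e) (hab : a ≠ b) : G.Adj a b := by
  induction e with
  | _ x y =>
    rw [Sym2.mem_iff] at ha hb
    rw [SimpleGraph.mem_edgeSet] at he
    rcases ha with rfl | rfl <;> rcases hb with rfl | rfl
    · exact absurd rfl hab
    · exact he
    · exact he.symm
    · exact absurd rfl hab

/-- Edges of a clique of `G` form a clique in the edge-clique graph. -/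
lemma isClique_edgesIn {V : Type*} (G : SimpleGraph V) {C : Set V} (hC : G.IsClique C) :
    (ECG.edgeCliqueGraph G).IsClique {e : G.edgeSet | ∀ v ∈ (e : Sym2 V), v ∈ C} := by
  intro e he f hf hef
  refine ⟨hef, hC.subset ?_⟩
  rintro v (hv | hv)
  · exact he v hv
  · exact hf v hv

/-- Endpoints of the edges in a clique of the edge-clique graph form a clique of `G`. -/
lemma isClique_endpoints {V : Type*} (G : SimpleGraph V) {D : Set G.edgeSet}
    (hD : (ECG.edgeCliqueGraph G).IsClique D) :
    G.IsClique {v : V | ∃ e ∈ D, v ∈ (e : Sym2 V)} := by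
  rintro a ⟨e, heD, hae⟩ b ⟨f, hfD, hbf⟩ hab
  by_cases hef : e = f
  · subst hef
    exact adj_of_mem_edge G e.2 hae hbf hab
  · exact (hD heD hfD hef).2 (Or.inl hae) (Or.inr hbf) hab

/-- For every finite simple graph `G`, the edge-clique cover number
`θ_e(G)` equals the vertex-clique cover number `κ(K_e(G))` of its edge-clique graph. -/
theorem edgeCliqueCoverNum_eq_cliqueCoverNum_edgeCliqueGraph
    {V : Type*} [Fintype V] (G : SimpleGraph V) :
    ECG.edgeCliqueCoverNum G = ECG.cliqueCoverNum (ECG.edgeCliqueGraph G) := by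
  classical
  unfold ECG.edgeCliqueCoverNum ECG.cliqueCoverNum
  haveI : Fintype G.edgeSet := Fintype.ofFinite _
  -- nonemptiness of the two option sets
  have hAne : {n | ∃ F : Finset (Set V), F.card = n ∧ (∀ C ∈ F, G.IsClique C) ∧
      ∀ e ∈ G.edgeSet, ∃ C ∈ F, ∀ v ∈ e, v ∈ C}.Nonempty := by
    refine ⟨_, (G.edgeFinset.image fun e => {v : V | v ∈ e}), rfl, ?_, ?_⟩
    · intro C hC
      obtain ⟨e, he, rfl⟩ := Finset.mem_image.mp hC
      rw [SimpleGraph.mem_edgeFinset] at he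
      intro a ha b hb hab
      exact adj_of_mem_edge G he ha hb hab
    · intro e he
      exact ⟨{v : V | v ∈ e}, Finset.mem_image.mpr
        ⟨e, SimpleGraph.mem_edgeFinset.mpr he, rfl⟩, fun v hv => hv⟩
  have hBne : {n | ∃ F : Finset (Set G.edgeSet), F.card = n ∧
      (∀ C ∈ F, (ECG.edgeCliqueGraph G).IsClique C) ∧
      ∀ v : G.edgeSet, ∃ C ∈ F, v ∈ C}.Nonempty := by
    refine ⟨_, (Finset.univ.image fun e : G.edgeSet => ({e} : Set G.edgeSet)), rfl, ?_, ?_⟩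
    · intro C hC
      obtain ⟨e, _, rfl⟩ := Finset.mem_image.mp hC
      exact Set.pairwise_singleton e _
    · intro e
      exact ⟨{e}, Finset.mem_image.mpr ⟨e, Finset.mem_univ e, rfl⟩, rfl⟩
  apply le_antisymm
  · -- θ_e(G) ≤ κ(K_e(G))
    obtain ⟨F', hF'card, hF'cl, hF'cov⟩ := Nat.sInf_mem hBne
    have hle : (F'.image fun D : Set G.edgeSet => {v : V | ∃ e ∈ D, v ∈ (e : Sym2 V)}).card ≤ F'.card :=
      Finset.card_image_le
    refine le_trans (Nat.sInf_le ?_) (hF'card ▸ hle)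
    refine ⟨F'.image fun D : Set G.edgeSet => {v : V | ∃ e ∈ D, v ∈ (e : Sym2 V)}, rfl, ?_, ?_⟩
    · intro C hC
      obtain ⟨D, hD, rfl⟩ := Finset.mem_image.mp hC
      exact isClique_endpoints G (hF'cl D hD)
    · intro e he
      obtain ⟨D, hD, heD⟩ := hF'cov ⟨e, he⟩
      exact ⟨_, Finset.mem_image.mpr ⟨D, hD, rfl⟩, fun v hv => ⟨⟨e, he⟩, heD, hv⟩⟩
  · -- κ(K_e(G)) ≤ θ_e(G)
    obtain ⟨F, hFcard, hFcl, hFcov⟩ := Nat.sInf_mem hAne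
    have hle : (F.image fun C : Set V => {e : G.edgeSet | ∀ v ∈ (e : Sym2 V), v ∈ C}).card ≤ F.card :=
      Finset.card_image_le
    refine le_trans (Nat.sInf_le ?_) (hFcard ▸ hle)
    refine ⟨F.image fun C : Set V => {e : G.edgeSet | ∀ v ∈ (e : Sym2 V), v ∈ C}, rfl, ?_, ?_⟩
    · intro D hD
      obtain ⟨C, hC, rfl⟩ := Finset.mem_image.mp hD
      exact isClique_edgesIn G (hFcl C hC)
    · intro e
      obtain ⟨C, hC, hCe⟩ := hFcov e e.2
      exact ⟨_, Finset.mem_image.mpr ⟨C, hC, rfl⟩, hCe⟩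
end

section
/- For every finite simple graph G and every independent set W of vertices of G, the sum over x in W of d'(x) is at most α'(G); that is, the quantity max{ Σ_{x∈W} d'(x) : W an independent set of G } is a lower bound for α'(G). -/
lemma ECG.card_le_indepNum {V : Type*} [Fintype V] (G : SimpleGraph V) (S : Finset V)
    (h : ECG.IsIndepSet G ↑S) : S.card ≤ ECG.indepNum G := by
  apply le_csSup
  · exact ⟨Fintype.card V, by rintro n ⟨T, -, rfl⟩; exact T.card_le_univ⟩
  · exact ⟨S, h, rfl⟩

lemma ECG.exists_indep_card {V : Type*} [Fintype V] (G : SimpleGraph V) :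
    ∃ S : Finset V, ECG.IsIndepSet G ↑S ∧ S.card = ECG.indepNum G := by
  have := Nat.sSup_mem (s := {n | ∃ S : Finset V, ECG.IsIndepSet G ↑S ∧ S.card = n})
    ⟨0, ∅, by simp [ECG.IsIndepSet], rfl⟩
    ⟨Fintype.card V, by rintro n ⟨T, -, rfl⟩; exact T.card_le_univ⟩
  exact this

/-- For every finite simple graph `G` and every independent set `W` of
vertices of `G`, `Σ_{x ∈ W} d'(x) ≤ α'(G)`, where `d'(x)` is the independence number of
the subgraph induced by the open neighborhood of `x` and `α'(G) = α(K_e(G))`. -/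
theorem sum_indepNum_neighborhood_le_alpha' {V : Type*} [Fintype V] (G : SimpleGraph V)
    (W : Finset V) (hW : ECG.IsIndepSet G ↑W) :
    ∑ x ∈ W, ECG.indepNum (G.induce (G.neighborSet x)) ≤
      ECG.indepNum (ECG.edgeCliqueGraph G) := by
  classical
  haveI : Fintype ↥G.edgeSet := (Set.toFinite G.edgeSet).fintype
  haveI : ∀ x : V, Fintype ↥(G.neighborSet x) := fun x => (Set.toFinite _).fintype
  -- choose maximum independent sets in each neighborhood
  have hex : ∀ x : V, ∃ S : Finset ↥(G.neighborSet x),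
      ECG.IsIndepSet (G.induce (G.neighborSet x)) ↑S ∧
      S.card = ECG.indepNum (G.induce (G.neighborSet x)) :=
    fun x => ECG.exists_indep_card _
  choose S hSind hScard using hex
  -- the embedding of a neighborhood vertex into the edge set
  have fdef : ∀ (x : V) (y : ↥(G.neighborSet x)), s(x, (y : V)) ∈ G.edgeSet :=
    fun x y => G.mem_edgeSet.2 y.2
  set f : (x : V) → ↥(G.neighborSet x) → ↥G.edgeSet :=
    fun x y => ⟨s(x, (y : V)), fdef x y⟩ with hf
  have hxmem : ∀ (x : V) (y : ↥(G.neighborSet x)), x ∈ ((f x y : ↥G.edgeSet) : Sym2 V) := by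
    intro x y; simp [hf]
  have hymem : ∀ (x : V) (y : ↥(G.neighborSet x)), (y : V) ∈ ((f x y : ↥G.edgeSet) : Sym2 V) := by
    intro x y; simp [hf]
  have finj : ∀ x : V, Function.Injective (f x) := by
    intro x a b hab
    have : s(x, (a : V)) = s(x, (b : V)) := congrArg Subtype.val hab
    exact Subtype.ext (Sym2.congr_right.1 this)
  -- key fact: if an edge from x's star equals an edge from x''s star with x ≠ x', contradiction
  have hdisj : ∀ x ∈ W, ∀ x' ∈ W, x ≠ x' →
      ∀ (y : ↥(G.neighborSet x)) (y' : ↥(G.neighborSet x')), f x y ≠ f x' y' := by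
    intro x hx x' hx' hne y y' heq
    have hxy : G.Adj x (y : V) := y.2
    have h2 : s(x, (y : V)) = s(x', (y' : V)) := congrArg Subtype.val heq
    have hx'in : x' ∈ s(x, (y : V)) := by rw [h2]; simp
    rcases Sym2.mem_iff.1 hx'in with h | h
    · exact hne h.symm
    · exact hW hx hx' hne (h ▸ hxy)
  set T : Finset ↥G.edgeSet := W.biUnion (fun x => (S x).image (f x)) with hT
  have hcard : T.card = ∑ x ∈ W, ECG.indepNum (G.induce (G.neighborSet x)) := by
    rw [hT, Finset.card_biUnion]
    · refine Finset.sum_congr rfl fun x _ => ?_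
      rw [Finset.card_image_of_injective _ (finj x), hScard]
    · intro x hx x' hx' hne
      simp only [Finset.disjoint_left, Finset.mem_image]
      rintro e ⟨y, -, rfl⟩ ⟨y', -, heq⟩
      exact hdisj x hx x' hx' hne y y' heq.symm
  rw [← hcard]
  apply ECG.card_le_indepNum
  -- T is independent in the edge-clique graph
  intro e he e' he' hne hadj
  simp only [hT, Finset.coe_biUnion, Finset.mem_coe, Set.mem_iUnion, Finset.mem_image] at he he'
  obtain ⟨x, hx, y, hy, rfl⟩ := he
  obtain ⟨x', hx', y', hy', rfl⟩ := he'
  obtain ⟨hne', hcl⟩ := hadj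
  by_cases hxx : x = x'
  · subst hxx
    have hyy : (y : V) ≠ (y' : V) := by
      intro h
      exact hne (congrArg (f x) (Subtype.ext h))
    have hadjyy : G.Adj (y : V) (y' : V) :=
      hcl (Set.mem_setOf.2 (Or.inl (hymem x y))) (Set.mem_setOf.2 (Or.inr (hymem x y'))) hyy
    have : ¬ (G.induce (G.neighborSet x)).Adj y y' :=
      hSind x hy hy' (fun h => hyy (congrArg Subtype.val h))
    exact this hadjyy
  · have : G.Adj x x' :=
      hcl (Set.mem_setOf.2 (Or.inl (hxmem x y))) (Set.mem_setOf.2 (Or.inr (hxmem x' y'))) hxx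
    exact hW hx hx' hxx this
end

section
/- Let G be a finite cograph. Then α'(G) = max{ Σ_{x∈W} d'(x) : W an independent set of vertices of G }. -/
open SimpleGraph Finset
set_option linter.unusedSectionVars false
set_option maxHeartbeats 1000000

namespace AuxECG

variable {V : Type*} [Fintype V] [DecidableEq V] {G : SimpleGraph V}

def IndepF (G : SimpleGraph V) (T : Finset V) : Prop :=
  ∀ x ∈ T, ∀ y ∈ T, x ≠ y → ¬ G.Adj x y

noncomputable def alphaIn (G : SimpleGraph V) (A : Set V) : ℕ :=
  sSup {n | ∃ T : Finset V, ↑T ⊆ A ∧ IndepF G T ∧ T.card = n}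

lemma alphaIn_set_nonempty (A : Set V) :
    {n | ∃ T : Finset V, ↑T ⊆ A ∧ IndepF G T ∧ T.card = n}.Nonempty :=
  ⟨0, ∅, by simp, by intro x hx; simp at hx, rfl⟩

lemma alphaIn_bdd (A : Set V) :
    BddAbove {n | ∃ T : Finset V, ↑T ⊆ A ∧ IndepF G T ∧ T.card = n} :=
  ⟨Fintype.card V, by rintro n ⟨T, -, -, rfl⟩; exact T.card_le_univ⟩

lemma le_alphaIn {A : Set V} {T : Finset V} (h1 : ↑T ⊆ A) (h2 : IndepF G T) :
    T.card ≤ alphaIn G A :=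
  le_csSup (alphaIn_bdd A) ⟨T, h1, h2, rfl⟩

lemma alphaIn_mono {A B : Set V} (h : A ⊆ B) : alphaIn G A ≤ alphaIn G B :=
  csSup_le (alphaIn_set_nonempty A)
    (by rintro n ⟨T, hT, hI, rfl⟩; exact le_alphaIn (fun x hx => h (hT hx)) hI)

lemma alphaIn_witness (A : Set V) :
    ∃ T : Finset V, ↑T ⊆ A ∧ IndepF G T ∧ T.card = alphaIn G A :=
  Nat.sSup_mem (alphaIn_set_nonempty A) (alphaIn_bdd A)

noncomputable def cliqueWt (G : SimpleGraph V) (S : Finset V) (m : V → ℕ) : ℕ :=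
  sSup {n | ∃ Q : Finset V, Q ⊆ S ∧ G.IsClique ↑Q ∧ ∑ a ∈ Q, m a = n}

lemma cliqueWt_set_nonempty (S : Finset V) (m : V → ℕ) :
    {n | ∃ Q : Finset V, Q ⊆ S ∧ G.IsClique ↑Q ∧ ∑ a ∈ Q, m a = n}.Nonempty :=
  ⟨0, ∅, by simp, by simp [SimpleGraph.IsClique, Set.Pairwise], by simp⟩

lemma cliqueWt_bdd (S : Finset V) (m : V → ℕ) :
    BddAbove {n | ∃ Q : Finset V, Q ⊆ S ∧ G.IsClique ↑Q ∧ ∑ a ∈ Q, m a = n} :=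
  ⟨∑ a ∈ S, m a, by
    rintro n ⟨Q, hQ, -, rfl⟩
    exact Finset.sum_le_sum_of_subset hQ⟩

lemma le_cliqueWt {S Q : Finset V} {m : V → ℕ} (h1 : Q ⊆ S) (h2 : G.IsClique ↑Q) :
    ∑ a ∈ Q, m a ≤ cliqueWt G S m :=
  le_csSup (cliqueWt_bdd S m) ⟨Q, h1, h2, rfl⟩

lemma cliqueWt_mono {S S' : Finset V} (m : V → ℕ) (h : S ⊆ S') :
    cliqueWt G S m ≤ cliqueWt G S' m :=
  csSup_le (cliqueWt_set_nonempty S m)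
    (by rintro n ⟨Q, hQ, hc, rfl⟩; exact le_cliqueWt (hQ.trans h) hc)

lemma cliqueWt_witness (S : Finset V) (m : V → ℕ) :
    ∃ Q : Finset V, Q ⊆ S ∧ G.IsClique ↑Q ∧ ∑ a ∈ Q, m a = cliqueWt G S m :=
  Nat.sSup_mem (cliqueWt_set_nonempty S m) (cliqueWt_bdd S m)

lemma singleton_clique (a : V) : G.IsClique (↑({a} : Finset V)) := by
  simp only [Finset.coe_singleton]
  exact Set.pairwise_singleton a G.Adj

/-- helper to produce cliques of the union of two edges -/
lemma clique_pair {e f : Sym2 V} {x y z w : V} (he : e = s(x, y)) (hf : f = s(z, w))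
    (h1 : G.Adj x y) (h2 : G.Adj z w)
    (h3 : x ≠ z → G.Adj x z) (h4 : x ≠ w → G.Adj x w)
    (h5 : y ≠ z → G.Adj y z) (h6 : y ≠ w → G.Adj y w) :
    G.IsClique {v | v ∈ e ∨ v ∈ f} := by
  subst he hf
  intro u hu t ht hut
  simp only [Set.mem_setOf_eq, Sym2.mem_iff] at hu ht
  rcases hu with (rfl | rfl) | (rfl | rfl) <;> rcases ht with (rfl | rfl) | (rfl | rfl) <;>
    first
      | exact absurd rfl hut
      | exact h1 | exact h1.symm | exact h2 | exact h2.symm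
      | exact h3 hut | exact (h3 (Ne.symm hut)).symm
      | exact h4 hut | exact (h4 (Ne.symm hut)).symm
      | exact h5 hut | exact (h5 (Ne.symm hut)).symm
      | exact h6 hut | exact (h6 (Ne.symm hut)).symm

lemma sym2_eq {e : Sym2 V} {x y : V} (hx : x ∈ e) (hy : y ∈ e) (hxy : x ≠ y) :
    e = s(x, y) := by
  induction e with
  | _ u v =>
    simp only [Sym2.mem_iff] at hx hy
    rcases hx with rfl | rfl <;> rcases hy with rfl | rfl <;>
      first
        | exact absurd rfl hxy
        | rfl
        | exact Sym2.eq_swap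

lemma p4_of (hP4 : IsEmpty (SimpleGraph.pathGraph 4 ↪g G)) {a b c d : V}
    (hab : G.Adj a b) (hbc : G.Adj b c) (hcd : G.Adj c d)
    (hac : ¬G.Adj a c) (had : ¬G.Adj a d) (hbd : ¬G.Adj b d) : False := by
  have nab : a ≠ b := hab.ne
  have nbc : b ≠ c := hbc.ne
  have ncd : c ≠ d := hcd.ne
  have nac : a ≠ c := by rintro rfl; exact had hcd
  have nad : a ≠ d := by rintro rfl; exact hbd hab.symm
  have nbd : b ≠ d := by rintro rfl; exact had hab
  refine hP4.false ?_
  refine ⟨⟨![a, b, c, d], ?_⟩, @fun i j => ?_⟩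
  · intro i j hij
    fin_cases i <;> fin_cases j <;> simp_all
  · show G.Adj (![a, b, c, d] i) (![a, b, c, d] j) ↔ _
    fin_cases i <;> fin_cases j <;>
      simp [SimpleGraph.pathGraph_adj, hab, hbc, hcd, hac, had, hbd,
        hab.symm, hbc.symm, hcd.symm] <;>
      first
        | decide
        | exact fun h => hac h.symm
        | exact fun h => had h.symm
        | exact fun h => hbd h.symm
        | (refine iff_of_false ?_ (by decide)
           first
             | exact fun h => hac h.symm
             | exact fun h => had h.symm
             | exact fun h => hbd h.symm)

lemma compl_p4free (hP4 : IsEmpty (SimpleGraph.pathGraph 4 ↪g G)) :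
    IsEmpty (SimpleGraph.pathGraph 4 ↪g Gᶜ) := by
  constructor
  intro f
  have adj : ∀ i j : Fin 4, (SimpleGraph.pathGraph 4).Adj i j → ¬ G.Adj (f i) (f j) := by
    intro i j h
    exact (f.map_rel_iff.mpr h).2
  have nadj : ∀ i j : Fin 4, i ≠ j → ¬ (SimpleGraph.pathGraph 4).Adj i j → G.Adj (f i) (f j) := by
    intro i j hij h
    by_contra hg
    exact h (f.map_rel_iff.mp ⟨f.injective.ne hij, hg⟩)
  have h02 : G.Adj (f 0) (f 2) := nadj 0 2 (by decide) (by rw [SimpleGraph.pathGraph_adj]; decide)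
  have h03 : G.Adj (f 0) (f 3) := nadj 0 3 (by decide) (by rw [SimpleGraph.pathGraph_adj]; decide)
  have h13 : G.Adj (f 1) (f 3) := nadj 1 3 (by decide) (by rw [SimpleGraph.pathGraph_adj]; decide)
  have h01 : ¬ G.Adj (f 0) (f 1) := adj 0 1 (by rw [SimpleGraph.pathGraph_adj]; decide)
  have h12 : ¬ G.Adj (f 1) (f 2) := adj 1 2 (by rw [SimpleGraph.pathGraph_adj]; decide)
  have h23 : ¬ G.Adj (f 2) (f 3) := adj 2 3 (by rw [SimpleGraph.pathGraph_adj]; decide)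
  exact p4_of hP4 h02.symm h03 h13.symm h23 (fun h => h12 h.symm) h01

open Classical in
lemma h1 (hP4 : IsEmpty (SimpleGraph.pathGraph 4 ↪g G)) (A B : Finset V) (v : V)
    (hAne : A.Nonempty) (hBne : B.Nonempty) (hdisj : Disjoint A B)
    (hvA : v ∉ A) (hvB : v ∉ B)
    (hnc : ∀ a ∈ A, ∀ b ∈ B, ¬G.Adj a b) :
    ∃ A' B' : Finset V, A' ∪ B' = insert v (A ∪ B) ∧ Disjoint A' B' ∧
      A'.Nonempty ∧ B'.Nonempty ∧
      ((∀ a ∈ A', ∀ b ∈ B', ¬G.Adj a b) ∨ (∀ a ∈ A', ∀ b ∈ B', G.Adj a b)) := by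
  by_cases hA1 : ∃ a ∈ A, G.Adj v a
  · by_cases hB1 : ∃ b ∈ B, G.Adj v b
    · by_cases hall : ∀ u ∈ A ∪ B, G.Adj v u
      · refine ⟨{v}, A ∪ B, ?_, ?_, ⟨v, mem_singleton_self v⟩, hAne.mono subset_union_left, Or.inr ?_⟩
        · rw [Finset.insert_eq]
        · simp only [Finset.disjoint_singleton_left, Finset.mem_union]
          rintro (h | h) <;> [exact hvA h; exact hvB h]
        · intro a ha b hb
          rw [Finset.mem_singleton] at ha
          subst ha
          exact hall b hb
      · push_neg at hall
        obtain ⟨w0, hw0, hvw0⟩ := hall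
        by_cases hcr : ∃ a ∈ A ∪ B, ∃ w ∈ A ∪ B, G.Adj v a ∧ ¬G.Adj v w ∧ G.Adj a w
        · exfalso
          obtain ⟨a, ha, w, hw, hva, hvw, haw⟩ := hcr
          rcases Finset.mem_union.mp ha with haA | haB
          · have hwA : w ∈ A := by
              rcases Finset.mem_union.mp hw with h | h
              · exact h
              · exact absurd haw (hnc a haA w h)
            obtain ⟨b, hbB, hvb⟩ := hB1
            exact p4_of hP4 haw.symm hva.symm hvb (fun h => hvw h.symm)
              (hnc w hwA b hbB) (hnc a haA b hbB)
          · have hwB : w ∈ B := by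
              rcases Finset.mem_union.mp hw with h | h
              · exact absurd haw.symm (hnc w h a haB)
              · exact h
            obtain ⟨b, hbA, hvb⟩ := hA1
            exact p4_of hP4 haw.symm hva.symm hvb (fun h => hvw h.symm)
              (fun h => hnc b hbA w hwB h.symm) (fun h => hnc b hbA a haB h.symm)
        · push_neg at hcr
          refine ⟨insert v ((A ∪ B).filter (fun u => G.Adj v u)),
            (A ∪ B).filter (fun u => ¬G.Adj v u), ?_, ?_, insert_nonempty _ _,
            ⟨w0, Finset.mem_filter.mpr ⟨hw0, hvw0⟩⟩, Or.inl ?_⟩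
          · rw [Finset.insert_union, Finset.filter_union_filter_not_eq]
          · rw [Finset.disjoint_insert_left]
            constructor
            · intro h
              rcases Finset.mem_filter.mp h with ⟨h1, -⟩
              rcases Finset.mem_union.mp h1 with h | h <;> [exact hvA h; exact hvB h]
            · exact Finset.disjoint_filter_filter_not _ _ _
          · intro x hx y hy
            have hy' := Finset.mem_filter.mp hy
            rcases Finset.mem_insert.mp hx with rfl | hx'
            · exact hy'.2
            · have hx'' := Finset.mem_filter.mp hx'
              intro hxy
              exact hcr x hx''.1 y hy'.1 hx''.2 hy'.2 hxy
    · push_neg at hB1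
      refine ⟨B, insert v A, ?_, ?_, hBne, insert_nonempty _ _, Or.inl ?_⟩
      · rw [Finset.union_insert, Finset.union_comm B A]
      · rw [Finset.disjoint_insert_right]
        exact ⟨hvB, hdisj.symm⟩
      · intro x hx y hy
        rcases Finset.mem_insert.mp hy with rfl | hy'
        · exact fun h => hB1 x hx h.symm
        · exact fun h => hnc y hy' x hx h.symm
  · push_neg at hA1
    refine ⟨A, insert v B, ?_, ?_, hAne, insert_nonempty _ _, Or.inl ?_⟩
    · rw [Finset.union_insert]
    · rw [Finset.disjoint_insert_right]
      exact ⟨hvA, hdisj⟩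
    · intro x hx y hy
      rcases Finset.mem_insert.mp hy with rfl | hy'
      · exact fun h => hA1 x hx h.symm
      · exact hnc x hx y hy'

lemma seinsche (hP4 : IsEmpty (SimpleGraph.pathGraph 4 ↪g G)) :
    ∀ U : Finset V, 2 ≤ U.card →
      ∃ A B : Finset V, A ∪ B = U ∧ Disjoint A B ∧ A.Nonempty ∧ B.Nonempty ∧
        ((∀ a ∈ A, ∀ b ∈ B, ¬G.Adj a b) ∨ (∀ a ∈ A, ∀ b ∈ B, G.Adj a b)) := by
  intro U
  induction U using Finset.strongInduction with
  | _ U ih =>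
    intro hU
    have hUne : U.Nonempty := Finset.card_pos.mp (by omega)
    obtain ⟨v, hv⟩ := hUne
    set U' := U.erase v with hU'
    have hcard' : U'.card + 1 = U.card := Finset.card_erase_add_one hv
    have hins : insert v U' = U := Finset.insert_erase hv
    have hvU' : v ∉ U' := Finset.notMem_erase v U
    by_cases h1c : U'.card = 1
    · obtain ⟨u, hu⟩ := Finset.card_eq_one.mp h1c
      have huU' : u ∈ U' := hu ▸ Finset.mem_singleton_self u
      have hvu : v ≠ u := fun h => hvU' (h ▸ huU')
      by_cases hadj : G.Adj v u
      · refine ⟨{v}, {u}, ?_, Finset.disjoint_singleton.mpr hvu, ⟨v, mem_singleton_self v⟩,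
          ⟨u, mem_singleton_self u⟩, Or.inr ?_⟩
        · rw [← hins, hu]; rw [Finset.insert_eq]
        · intro a ha b hb
          rw [Finset.mem_singleton] at ha hb; subst ha; subst hb; exact hadj
      · refine ⟨{v}, {u}, ?_, Finset.disjoint_singleton.mpr hvu, ⟨v, mem_singleton_self v⟩,
          ⟨u, mem_singleton_self u⟩, Or.inl ?_⟩
        · rw [← hins, hu]; rw [Finset.insert_eq]
        · intro a ha b hb
          rw [Finset.mem_singleton] at ha hb; subst ha; subst hb; exact hadj
    · have h2c : 2 ≤ U'.card := by omega
      obtain ⟨A, B, hun, hdisj, hAne, hBne, hsplit⟩ :=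
        ih U' (Finset.erase_ssubset hv) h2c
      have hvA : v ∉ A := fun h => hvU' (hun ▸ Finset.mem_union_left B h)
      have hvB : v ∉ B := fun h => hvU' (hun ▸ Finset.mem_union_right A h)
      rcases hsplit with hnc | hac
      · obtain ⟨A', B', h1', h2', h3', h4', h5'⟩ :=
          h1 hP4 A B v hAne hBne hdisj hvA hvB hnc
        exact ⟨A', B', by rw [h1', hun, hins], h2', h3', h4', h5'⟩
      · have hncc : ∀ a ∈ A, ∀ b ∈ B, ¬Gᶜ.Adj a b := by
          intro a ha b hb hcadj
          exact hcadj.2 (hac a ha b hb)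
        obtain ⟨A', B', h1', h2', h3', h4', h5'⟩ :=
          h1 (G := Gᶜ) (compl_p4free hP4) A B v hAne hBne hdisj hvA hvB hncc
        refine ⟨A', B', by rw [h1', hun, hins], h2', h3', h4', ?_⟩
        rcases h5' with h | h
        · refine Or.inr fun a ha b hb => ?_
          have hne : a ≠ b := fun heq => (Finset.disjoint_left.mp h2' ha) (heq ▸ hb)
          by_contra hgadj
          exact h a ha b hb ⟨hne, hgadj⟩
        · exact Or.inl fun a ha b hb hgadj => (h a ha b hb).2 hgadj

/-- weighted clique cover bound for cographs -/
lemma wcc (hP4 : IsEmpty (SimpleGraph.pathGraph 4 ↪g G)) :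
    ∀ (S : Finset V) (m : V → ℕ),
      ∃ I : Finset V, I ⊆ S ∧ IndepF G I ∧
        ∑ a ∈ S, m a ≤ I.card * cliqueWt G S m := by
  intro S
  induction S using Finset.strongInduction with
  | _ S ih =>
    intro m
    by_cases hS : S.card ≤ 1
    · rcases Finset.eq_empty_or_nonempty S with rfl | ⟨a, ha⟩
      · exact ⟨∅, Finset.Subset.refl _, by intro x hx; simp at hx, by simp⟩
      · have hSa : S = {a} := Finset.eq_singleton_iff_unique_mem.mpr
          ⟨ha, fun b hb => Finset.card_le_one.mp hS b hb a ha⟩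
        subst hSa
        refine ⟨{a}, Finset.Subset.refl _, ?_, ?_⟩
        · intro x hx y hy hxy
          rw [Finset.mem_singleton] at hx hy
          exact absurd (hx.trans hy.symm) hxy
        · rw [Finset.sum_singleton, Finset.card_singleton, one_mul]
          have := le_cliqueWt (G := G) (m := m) (Finset.Subset.refl {a}) (singleton_clique a)
          rwa [Finset.sum_singleton] at this
    · obtain ⟨A, B, hun, hdisj, hAne, hBne, hsplit⟩ := seinsche hP4 S (by omega)
      have hAS : A ⊆ S := hun ▸ Finset.subset_union_left
      have hBS : B ⊆ S := hun ▸ Finset.subset_union_right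
      have hAss : A ⊂ S := by
        refine Finset.ssubset_iff_of_subset hAS |>.mpr ?_
        obtain ⟨b, hb⟩ := hBne
        exact ⟨b, hBS hb, fun hbA => (Finset.disjoint_left.mp hdisj hbA) hb⟩
      have hBss : B ⊂ S := by
        refine Finset.ssubset_iff_of_subset hBS |>.mpr ?_
        obtain ⟨a, ha⟩ := hAne
        exact ⟨a, hAS ha, fun haB => (Finset.disjoint_left.mp hdisj ha) haB⟩
      obtain ⟨IA, hIA, hIAind, hIAs⟩ := ih A hAss m
      obtain ⟨IB, hIB, hIBind, hIBs⟩ := ih B hBss m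
      have hsum : ∑ a ∈ S, m a = ∑ a ∈ A, m a + ∑ a ∈ B, m a := by
        rw [← hun, Finset.sum_union hdisj]
      rcases hsplit with hnc | hac
      · refine ⟨IA ∪ IB, Finset.union_subset (hIA.trans hAS) (hIB.trans hBS), ?_, ?_⟩
        · intro x hx y hy hxy
          rcases Finset.mem_union.mp hx with hxA | hxB <;>
            rcases Finset.mem_union.mp hy with hyA | hyB
          · exact hIAind x hxA y hyA hxy
          · exact hnc x (hIA hxA) y (hIB hyB)
          · exact fun h => hnc y (hIA hyA) x (hIB hxB) h.symm
          · exact hIBind x hxB y hyB hxy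
        · have hdisjI : Disjoint IA IB := hdisj.mono hIA hIB
          rw [Finset.card_union_of_disjoint hdisjI, hsum]
          calc ∑ a ∈ A, m a + ∑ a ∈ B, m a
              ≤ IA.card * cliqueWt G A m + IB.card * cliqueWt G B m :=
                Nat.add_le_add hIAs hIBs
            _ ≤ IA.card * cliqueWt G S m + IB.card * cliqueWt G S m := by
                gcongr <;> exact cliqueWt_mono m (by assumption)
            _ = (IA.card + IB.card) * cliqueWt G S m := by ring
      · have htsum : cliqueWt G A m + cliqueWt G B m ≤ cliqueWt G S m := by
          obtain ⟨QA, hQA, hQAc, hQAs⟩ := cliqueWt_witness (G := G) A m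
          obtain ⟨QB, hQB, hQBc, hQBs⟩ := cliqueWt_witness (G := G) B m
          have hdisjQ : Disjoint QA QB := hdisj.mono hQA hQB
          have hclq : G.IsClique (↑(QA ∪ QB) : Set V) := by
            intro x hx y hy hxy
            simp only [Finset.coe_union, Set.mem_union, Finset.mem_coe] at hx hy
            rcases hx with hxA | hxB <;> rcases hy with hyA | hyB
            · exact hQAc hxA hyA hxy
            · exact hac x (hQA hxA) y (hQB hyB)
            · exact (hac y (hQA hyA) x (hQB hxB)).symm
            · exact hQBc hxB hyB hxy
          have := le_cliqueWt (G := G) (m := m)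
            (Finset.union_subset (hQA.trans hAS) (hQB.trans hBS)) hclq
          rwa [Finset.sum_union hdisjQ, hQAs, hQBs] at this
        rcases le_total IA.card IB.card with hord | hord
        · refine ⟨IB, hIB.trans hBS, hIBind, ?_⟩
          rw [hsum]
          calc ∑ a ∈ A, m a + ∑ a ∈ B, m a
              ≤ IA.card * cliqueWt G A m + IB.card * cliqueWt G B m :=
                Nat.add_le_add hIAs hIBs
            _ ≤ IB.card * cliqueWt G A m + IB.card * cliqueWt G B m := by gcongr
            _ = IB.card * (cliqueWt G A m + cliqueWt G B m) := by ring
            _ ≤ IB.card * cliqueWt G S m := Nat.mul_le_mul_left _ htsum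
        · refine ⟨IA, hIA.trans hAS, hIAind, ?_⟩
          rw [hsum]
          calc ∑ a ∈ A, m a + ∑ a ∈ B, m a
              ≤ IA.card * cliqueWt G A m + IB.card * cliqueWt G B m :=
                Nat.add_le_add hIAs hIBs
            _ ≤ IA.card * cliqueWt G A m + IA.card * cliqueWt G B m := by gcongr
            _ = IA.card * (cliqueWt G A m + cliqueWt G B m) := by ring
            _ ≤ IA.card * cliqueWt G S m := Nat.mul_le_mul_left _ htsum

/-- hypotheses for the main induction -/
def MainH (G : SimpleGraph V) (U : Finset V) (k : ℕ) (F : Finset (Sym2 V))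
    (S : Finset V) (m : V → ℕ) : Prop :=
  (∀ e ∈ F, ∃ x y, e = s(x, y) ∧ G.Adj x y ∧ x ∈ U ∧ y ∈ U) ∧
  (∀ e ∈ F, ∀ f ∈ F, e ≠ f → ¬ G.IsClique {v | v ∈ e ∨ v ∈ f}) ∧
  S ⊆ U ∧
  (∀ a ∈ S, ∀ e ∈ F, a ∉ e) ∧
  (∀ a ∈ S, 1 ≤ m a) ∧
  (∀ Q ⊆ S, G.IsClique ↑Q → ∑ a ∈ Q, m a ≤ k) ∧
  (∀ a ∈ S, ∀ e ∈ F, ∀ x y, e = s(x, y) → ¬(G.Adj a x ∧ G.Adj a y))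

def MainC (G : SimpleGraph V) (U : Finset V) (k : ℕ) (F : Finset (Sym2 V))
    (S : Finset V) (m : V → ℕ) : Prop :=
  ∃ W : Finset V, W ⊆ U ∧ IndepF G W ∧
    F.card + ∑ a ∈ S, m a ≤ ∑ x ∈ W, max (alphaIn G (G.neighborSet x)) k

lemma main_base (U : Finset V) (k : ℕ) (F : Finset (Sym2 V)) (S : Finset V) (m : V → ℕ)
    (hH : MainH G U k F S m) (hU : U.card ≤ 1) : MainC G U k F S m := by
  obtain ⟨hFU, -, hSU, -, -, hclq, -⟩ := hH
  have hF : F = ∅ := by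
    rw [Finset.eq_empty_iff_forall_notMem]
    intro e he
    obtain ⟨x, y, -, hadj, hxU, hyU⟩ := hFU e he
    have : x = y := Finset.card_le_one.mp hU x hxU y hyU
    exact hadj.ne this
  subst hF
  refine ⟨S, hSU, ?_, ?_⟩
  · intro x hx y hy hxy
    exact absurd (Finset.card_le_one.mp hU x (hSU hx) y (hSU hy)) hxy
  · rw [Finset.card_empty, zero_add]
    refine Finset.sum_le_sum fun a ha => ?_
    have h1 : ∑ b ∈ {a}, m b ≤ k :=
      hclq {a} (Finset.singleton_subset_iff.mpr ha) (singleton_clique a)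
    rw [Finset.sum_singleton] at h1
    exact h1.trans (le_max_right _ _)

lemma sum_split (S A B : Finset V) (m : V → ℕ) (hun : A ∪ B = U) (hdisj : Disjoint A B)
    (hSU : S ⊆ U) : ∑ a ∈ S, m a = ∑ a ∈ S ∩ A, m a + ∑ a ∈ S ∩ B, m a := by
  rw [← Finset.sum_union (hdisj.mono Finset.inter_subset_right Finset.inter_subset_right),
    ← Finset.inter_union_distrib_left, hun, Finset.inter_eq_left.mpr hSU]

open Classical in
lemma main_nocross {n : ℕ}
    (ih : ∀ (U : Finset V) (k : ℕ) (F : Finset (Sym2 V)) (S : Finset V) (m : V → ℕ),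
      U.card ≤ n → MainH G U k F S m → MainC G U k F S m)
    (U : Finset V) (k : ℕ) (F : Finset (Sym2 V)) (S : Finset V) (m : V → ℕ)
    (hH : MainH G U k F S m) (A B : Finset V) (hun : A ∪ B = U) (hdisj : Disjoint A B)
    (hAne : A.Nonempty) (hBne : B.Nonempty) (hcard : U.card ≤ n + 1)
    (hnc : ∀ a ∈ A, ∀ b ∈ B, ¬G.Adj a b) : MainC G U k F S m := by
  obtain ⟨hFU, hpair, hSU, hSF, hm1, hclq, hSadj⟩ := hH
  have hcardAB : A.card + B.card = U.card := by
    rw [← hun, Finset.card_union_of_disjoint hdisj]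
  have hcA : A.card ≤ n := by
    have := Finset.card_pos.mpr hBne; omega
  have hcB : B.card ≤ n := by
    have := Finset.card_pos.mpr hAne; omega
  set FA := F.filter (fun e => ∀ v ∈ e, v ∈ A) with hFAdef
  set FB := F.filter (fun e => ¬ ∀ v ∈ e, v ∈ A) with hFBdef
  have hcardF : FA.card + FB.card = F.card :=
    Finset.card_filter_add_card_filter_not _
  have hFBB : ∀ e ∈ FB, ∀ v ∈ e, v ∈ B := by
    intro e he
    have heF : e ∈ F := Finset.mem_filter.mp he |>.1
    have hnA : ¬ ∀ v ∈ e, v ∈ A := Finset.mem_filter.mp he |>.2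
    obtain ⟨x, y, rfl, hadj, hxU, hyU⟩ := hFU e heF
    have hmem : ∀ v : V, v ∈ s(x, y) → v ∈ A ∨ v ∈ B := by
      intro v hv
      rcases Sym2.mem_iff.mp hv with rfl | rfl
      · exact Finset.mem_union.mp (hun ▸ hxU)
      · exact Finset.mem_union.mp (hun ▸ hyU)
    have hx := hmem x (Sym2.mem_mk_left x y)
    have hy := hmem y (Sym2.mem_mk_right x y)
    rcases hx with hxA | hxB <;> rcases hy with hyA | hyB
    · exact absurd (by intro v hv; rcases Sym2.mem_iff.mp hv with rfl | rfl <;> assumption) hnA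
    · exact absurd hadj (hnc x hxA y hyB)
    · exact absurd hadj.symm (hnc y hyA x hxB)
    · intro v hv; rcases Sym2.mem_iff.mp hv with rfl | rfl <;> assumption
  have hHA : MainH G A k FA (S ∩ A) m := by
    refine ⟨?_, ?_, Finset.inter_subset_right, ?_, ?_, ?_, ?_⟩
    · intro e he
      have heF := Finset.mem_filter.mp he |>.1
      have hA' := Finset.mem_filter.mp he |>.2
      obtain ⟨x, y, rfl, hadj, -, -⟩ := hFU e heF
      exact ⟨x, y, rfl, hadj, hA' x (Sym2.mem_mk_left x y), hA' y (Sym2.mem_mk_right x y)⟩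
    · intro e he f hf hne
      exact hpair e (Finset.mem_filter.mp he |>.1) f (Finset.mem_filter.mp hf |>.1) hne
    · intro a ha e he
      exact hSF a (Finset.mem_inter.mp ha |>.1) e (Finset.mem_filter.mp he |>.1)
    · intro a ha
      exact hm1 a (Finset.mem_inter.mp ha |>.1)
    · intro Q hQ hQc
      exact hclq Q (hQ.trans Finset.inter_subset_left) hQc
    · intro a ha e he x y hxy
      exact hSadj a (Finset.mem_inter.mp ha |>.1) e (Finset.mem_filter.mp he |>.1) x y hxy
  have hHB : MainH G B k FB (S ∩ B) m := by
    refine ⟨?_, ?_, Finset.inter_subset_right, ?_, ?_, ?_, ?_⟩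
    · intro e he
      have heF := Finset.mem_filter.mp he |>.1
      obtain ⟨x, y, rfl, hadj, -, -⟩ := hFU e heF
      exact ⟨x, y, rfl, hadj, hFBB _ he x (Sym2.mem_mk_left x y),
        hFBB _ he y (Sym2.mem_mk_right x y)⟩
    · intro e he f hf hne
      exact hpair e (Finset.mem_filter.mp he |>.1) f (Finset.mem_filter.mp hf |>.1) hne
    · intro a ha e he
      exact hSF a (Finset.mem_inter.mp ha |>.1) e (Finset.mem_filter.mp he |>.1)
    · intro a ha
      exact hm1 a (Finset.mem_inter.mp ha |>.1)
    · intro Q hQ hQc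
      exact hclq Q (hQ.trans Finset.inter_subset_left) hQc
    · intro a ha e he x y hxy
      exact hSadj a (Finset.mem_inter.mp ha |>.1) e (Finset.mem_filter.mp he |>.1) x y hxy
  obtain ⟨WA, hWA, hWAind, hWAs⟩ := ih A k FA (S ∩ A) m hcA hHA
  obtain ⟨WB, hWB, hWBind, hWBs⟩ := ih B k FB (S ∩ B) m hcB hHB
  have hWdisj : Disjoint WA WB := hdisj.mono hWA hWB
  refine ⟨WA ∪ WB, by rw [← hun]; exact Finset.union_subset_union hWA hWB, ?_, ?_⟩
  · intro x hx y hy hxy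
    rcases Finset.mem_union.mp hx with hx' | hx' <;> rcases Finset.mem_union.mp hy with hy' | hy'
    · exact hWAind x hx' y hy' hxy
    · exact hnc x (hWA hx') y (hWB hy')
    · exact fun h => hnc y (hWA hy') x (hWB hx') h.symm
    · exact hWBind x hx' y hy' hxy
  · rw [Finset.sum_union hWdisj, ← hcardF,
      sum_split (U := U) S A B m hun hdisj hSU]
    omega

open Classical in
lemma xcount {A B : Finset V} (hac : ∀ a ∈ A, ∀ b ∈ B, G.Adj a b) (hBne : B.Nonempty)
    (hdisj : Disjoint A B) (FX : Finset (Sym2 V))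
    (hX : ∀ e ∈ FX, ∃ a b, e = s(a, b) ∧ a ∈ A ∧ b ∈ B ∧ G.Adj a b)
    (hpair : ∀ e ∈ FX, ∀ f ∈ FX, e ≠ f → ¬ G.IsClique {v | v ∈ e ∨ v ∈ f})
    (Q : Finset V) (hQA : Q ⊆ A) (hQc : G.IsClique ↑Q) :
    ∑ a ∈ Q, (FX.filter (fun e => a ∈ e)).card ≤ alphaIn G ↑B := by
  have hnotb : ∀ a ∈ A, ∀ e ∈ FX, a ∈ e → ∀ b ∈ B, b ∈ e → e = s(a, b) := by
    intro a ha e he hae b hb hbe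
    exact sym2_eq hae hbe (fun h => Finset.disjoint_left.mp hdisj ha (h ▸ hb))
  have hfibdisj : ∀ a ∈ Q, ∀ a' ∈ Q, a ≠ a' →
      Disjoint (FX.filter (fun e => a ∈ e)) (FX.filter (fun e => a' ∈ e)) := by
    intro a ha a' ha' hne
    rw [Finset.disjoint_left]
    intro e he he'
    obtain ⟨c, b, rfl, hcA, hbB, -⟩ := hX e (Finset.mem_filter.mp he |>.1)
    have h1 : a = c ∨ a = b := Sym2.mem_iff.mp (Finset.mem_filter.mp he |>.2)
    have h2 : a' = c ∨ a' = b := Sym2.mem_iff.mp (Finset.mem_filter.mp he' |>.2)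
    have hab : a ≠ b := fun h => Finset.disjoint_left.mp hdisj (hQA ha) (h ▸ hbB)
    have hab' : a' ≠ b := fun h => Finset.disjoint_left.mp hdisj (hQA ha') (h ▸ hbB)
    rcases h1 with rfl | h1
    · rcases h2 with rfl | h2
      · exact hne rfl
      · exact hab' h2
    · exact hab h1
  rw [← Finset.card_biUnion hfibdisj]
  set FXQ := Q.biUnion (fun a => FX.filter (fun e => a ∈ e)) with hFXQdef
  have hFXQX : FXQ ⊆ FX := by
    intro e he
    obtain ⟨a, -, he'⟩ := Finset.mem_biUnion.mp he
    exact Finset.mem_filter.mp he' |>.1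
  set bend : Sym2 V → V := fun e => if h : ∃ b ∈ B, b ∈ e then h.choose else hBne.choose
    with hbenddef
  have hbend : ∀ e ∈ FX, bend e ∈ B ∧ bend e ∈ e := by
    intro e he
    obtain ⟨a, b, rfl, -, hbB, -⟩ := hX e he
    have h : ∃ b' ∈ B, b' ∈ s(a, b) := ⟨b, hbB, Sym2.mem_mk_right a b⟩
    rw [hbenddef]
    simp only [dif_pos h]
    exact ⟨h.choose_spec.1, h.choose_spec.2⟩
  have haend : ∀ e ∈ FXQ, ∃ a ∈ Q, e = s(a, bend e) ∧ G.Adj a (bend e) := by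
    intro e he
    obtain ⟨a, haQ, he'⟩ := Finset.mem_biUnion.mp he
    have heX := Finset.mem_filter.mp he' |>.1
    have hae := Finset.mem_filter.mp he' |>.2
    obtain ⟨hbB, hbe⟩ := hbend e heX
    exact ⟨a, haQ, hnotb a (hQA haQ) e heX hae _ hbB hbe,
      hac a (hQA haQ) _ hbB⟩
  have hinj : Set.InjOn bend ↑FXQ := by
    intro e he f hf hbe
    rw [Finset.mem_coe] at he hf
    obtain ⟨a, haQ, hea, hadja⟩ := haend e he
    obtain ⟨a', haQ', hfa, hadja'⟩ := haend f hf
    by_cases hne : a = a'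
    · subst hne; rw [hea, hfa, hbe]
    · exfalso
      have hef : e ≠ f := by
        intro h
        subst h
        have h2 : s(a, bend e) = s(a', bend e) := hea.symm.trans hfa
        rcases Sym2.eq_iff.mp h2 with ⟨h1, -⟩ | ⟨h1, -⟩
        · exact hne h1
        · have haB : a ∈ B := by rw [h1]; exact (hbend e (hFXQX he)).1
          exact Finset.disjoint_left.mp hdisj (hQA haQ) haB
      have hQadj : G.Adj a a' := hQc (Finset.mem_coe.mpr haQ) (Finset.mem_coe.mpr haQ') hne
      refine hpair e (hFXQX he) f (hFXQX hf) hef ?_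
      refine clique_pair hea (hbe ▸ hfa) hadja (hbe ▸ hadja') (fun _ => hQadj)
        (fun _ => hadja) (fun _ => (hbe ▸ hadja').symm) (fun h => absurd rfl h)
  have hcard : (FXQ.image bend).card = FXQ.card := Finset.card_image_of_injOn hinj
  have hsubB : ↑(FXQ.image bend) ⊆ (↑B : Set V) := by
    intro x hx
    rw [Finset.coe_image] at hx
    obtain ⟨e, he, rfl⟩ := hx
    exact (hbend e (hFXQX (Finset.mem_coe.mp he))).1
  have hindep : IndepF G (FXQ.image bend) := by
    intro x hx y hy hxy hadj
    obtain ⟨e, he, rfl⟩ := Finset.mem_image.mp hx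
    obtain ⟨f, hf, rfl⟩ := Finset.mem_image.mp hy
    have hef : e ≠ f := fun h => hxy (h ▸ rfl)
    obtain ⟨a, haQ, hea, hadja⟩ := haend e he
    obtain ⟨a', haQ', hfa, hadja'⟩ := haend f hf
    refine hpair e (hFXQX he) f (hFXQX hf) hef ?_
    by_cases hne : a = a'
    · subst hne
      exact clique_pair hea hfa hadja hadja' (fun h => absurd rfl h)
        (fun _ => hadja') (fun _ => hadja.symm) (fun _ => hadj)
    · have hQadj : G.Adj a a' := hQc (Finset.mem_coe.mpr haQ) (Finset.mem_coe.mpr haQ') hne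
      exact clique_pair hea hfa hadja hadja' (fun _ => hQadj)
        (fun _ => hac a (hQA haQ) _ (hbend f (hFXQX hf)).1)
        (fun _ => (hac a' (hQA haQ') _ (hbend e (hFXQX he)).1).symm)
        (fun _ => hadj)
  calc FXQ.card = (FXQ.image bend).card := hcard.symm
    _ ≤ alphaIn G ↑B := le_alphaIn hsubB hindep

open Classical in
lemma main_case3 {n : ℕ}
    (ih : ∀ (U : Finset V) (k : ℕ) (F : Finset (Sym2 V)) (S : Finset V) (m : V → ℕ),
      U.card ≤ n → MainH G U k F S m → MainC G U k F S m)
    (U : Finset V) (k : ℕ) (F : Finset (Sym2 V)) (S : Finset V) (m : V → ℕ)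
    (hH : MainH G U k F S m)
    (A B : Finset V) (hun : A ∪ B = U) (hdisj : Disjoint A B)
    (hAne : A.Nonempty) (hBne : B.Nonempty) (hcard : U.card ≤ n + 1)
    (hac : ∀ a ∈ A, ∀ b ∈ B, G.Adj a b)
    (hX : ∀ e ∈ F, ∃ a b, e = s(a, b) ∧ a ∈ A ∧ b ∈ B ∧ G.Adj a b)
    (I : Finset V) (tA tB : ℕ)
    (hI : I ⊆ S ∩ A) (hIind : IndepF G I)
    (hmtA : ∀ a ∈ I, m a ≤ tA)
    (htk : tA + tB ≤ k)
    (hups : ∑ a ∈ S, m a ≤ I.card * (tA + tB)) : MainC G U k F S m := by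
  obtain ⟨hFU, hpair, hSU, hSF, hm1, hclq, hSadj⟩ := hH
  set cnt : V → ℕ := fun a => (F.filter (fun e => a ∈ e)).card with hcntdef
  set X := A.filter (fun a => ∃ e ∈ F, a ∈ e) with hXdef
  have hXA : X ⊆ A := Finset.filter_subset _ _
  have hIA : I ⊆ A := hI.trans Finset.inter_subset_right
  have hIS : I ⊆ S := hI.trans Finset.inter_subset_left
  have hAU : A ⊆ U := hun ▸ Finset.subset_union_left
  have hIXdisj : Disjoint I X := by
    rw [Finset.disjoint_left]
    intro a haI haX
    obtain ⟨-, e, heF, hae⟩ := Finset.mem_filter.mp haX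
    exact hSF a (hIS haI) e heF hae
  have hSXnadj : ∀ a ∈ I, ∀ a' ∈ X, ¬ G.Adj a a' := by
    intro a haI a' haX
    obtain ⟨ha'A, e, heF, hae⟩ := Finset.mem_filter.mp haX
    obtain ⟨c, b, rfl, hcA, hbB, -⟩ := hX e heF
    have ha'c : a' = c := by
      rcases Sym2.mem_iff.mp hae with h | h
      · exact h
      · exact absurd (h ▸ hbB) (fun hb => Finset.disjoint_left.mp hdisj ha'A hb)
    subst ha'c
    intro hadj
    exact hSadj a (hIS haI) _ heF a' b rfl ⟨hadj, hac a (hIA haI) b hbB⟩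
  have hfibdisj : ∀ a ∈ X, ∀ a' ∈ X, a ≠ a' →
      Disjoint (F.filter (fun e => a ∈ e)) (F.filter (fun e => a' ∈ e)) := by
    intro a ha a' ha' hne
    rw [Finset.disjoint_left]
    intro e he he'
    obtain ⟨c, b, rfl, hcA, hbB, -⟩ := hX e (Finset.mem_filter.mp he |>.1)
    have h1 : a = c ∨ a = b := Sym2.mem_iff.mp (Finset.mem_filter.mp he |>.2)
    have h2 : a' = c ∨ a' = b := Sym2.mem_iff.mp (Finset.mem_filter.mp he' |>.2)
    have hab : a ≠ b := fun h => Finset.disjoint_left.mp hdisj (hXA ha) (h ▸ hbB)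
    have hab' : a' ≠ b := fun h => Finset.disjoint_left.mp hdisj (hXA ha') (h ▸ hbB)
    rcases h1 with rfl | h1
    · rcases h2 with rfl | h2
      · exact hne rfl
      · exact hab' h2
    · exact hab h1
  have hbiUn : X.biUnion (fun a => F.filter (fun e => a ∈ e)) = F := by
    apply Finset.Subset.antisymm
    · intro e he
      obtain ⟨a, -, he'⟩ := Finset.mem_biUnion.mp he
      exact Finset.mem_filter.mp he' |>.1
    · intro e he
      obtain ⟨a, b, rfl, haA, hbB, -⟩ := hX e he
      refine Finset.mem_biUnion.mpr ⟨a, ?_, Finset.mem_filter.mpr ⟨he, Sym2.mem_mk_left a b⟩⟩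
      exact Finset.mem_filter.mpr ⟨haA, _, he, Sym2.mem_mk_left a b⟩
  have hsumX : ∑ a ∈ X, cnt a = F.card := by
    rw [hcntdef, ← Finset.card_biUnion hfibdisj, hbiUn]
  set k' := max k (alphaIn G ↑B) with hk'def
  set m' : V → ℕ := fun a => if a ∈ X then cnt a else tA + tB with hm'def
  have hsumS' : ∑ a ∈ I ∪ X, m' a = I.card * (tA + tB) + F.card := by
    rw [Finset.sum_union hIXdisj]
    have h1 : ∑ a ∈ I, m' a = I.card * (tA + tB) := by
      have heach : ∀ a ∈ I, m' a = tA + tB := fun a ha => by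
        rw [hm'def]; simp only [if_neg (Finset.disjoint_left.mp hIXdisj ha)]
      rw [Finset.sum_congr rfl heach, Finset.sum_const, smul_eq_mul]
    have h2 : ∑ a ∈ X, m' a = F.card := by
      rw [← hsumX]
      refine Finset.sum_congr rfl (fun a ha => ?_)
      rw [hm'def]; simp only [if_pos ha]
    omega
  have hHA : MainH G A k' (∅ : Finset (Sym2 V)) (I ∪ X) m' := by
    refine ⟨fun e he => absurd he (Finset.notMem_empty e),
      fun e he => absurd he (Finset.notMem_empty e),
      Finset.union_subset hIA hXA,
      fun a _ e he => absurd he (Finset.notMem_empty e), ?_, ?_,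
      fun a _ e he => absurd he (Finset.notMem_empty e)⟩
    · intro a ha
      by_cases haX : a ∈ X
      · obtain ⟨-, e, heF, hae⟩ := Finset.mem_filter.mp haX
        have : 0 < cnt a := Finset.card_pos.mpr ⟨e, Finset.mem_filter.mpr ⟨heF, hae⟩⟩
        rw [hm'def]; simp only [if_pos haX]; omega
      · have haI : a ∈ I := by
          rcases Finset.mem_union.mp ha with h | h
          · exact h
          · exact absurd h haX
        rw [hm'def]; simp only [if_neg haX]
        have := hm1 a (hIS haI)
        have := hmtA a haI
        omega
    · intro Q hQ hQc
      by_cases hQX : ∃ a ∈ Q, a ∈ X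
      · obtain ⟨a0, ha0Q, ha0X⟩ := hQX
        have hQsub : Q ⊆ X := by
          intro a' ha'
          rcases Finset.mem_union.mp (hQ ha') with h | h
          · exfalso
            have hne : a' ≠ a0 := fun heq =>
              Finset.disjoint_left.mp hIXdisj (heq ▸ h) (heq ▸ ha0X)
            exact hSXnadj a' h a0 ha0X
              (hQc (Finset.mem_coe.mpr ha') (Finset.mem_coe.mpr ha0Q) hne)
          · exact h
        have heq : ∑ a ∈ Q, m' a = ∑ a ∈ Q, cnt a := by
          refine Finset.sum_congr rfl (fun a ha => ?_)
          rw [hm'def]; simp only [if_pos (hQsub ha)]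
        rw [heq]
        calc ∑ a ∈ Q, cnt a ≤ alphaIn G ↑B :=
              xcount hac hBne hdisj F hX hpair Q (hQsub.trans hXA) hQc
          _ ≤ k' := le_max_right _ _
      · push_neg at hQX
        have hQsub : Q ⊆ I := by
          intro a' ha'
          rcases Finset.mem_union.mp (hQ ha') with h | h
          · exact h
          · exact absurd h (hQX a' ha')
        have heq : ∑ a ∈ Q, m' a = Q.card * (tA + tB) := by
          have heach : ∀ a ∈ Q, m' a = tA + tB := fun a ha => by
            rw [hm'def]; simp only [if_neg (hQX a ha)]
          rw [Finset.sum_congr rfl heach, Finset.sum_const, smul_eq_mul]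
        rw [heq]
        have hQ1 : Q.card ≤ 1 := by
          by_contra h
          push_neg at h
          obtain ⟨x, hx, y, hy, hxy⟩ := Finset.one_lt_card.mp h
          exact hIind x (hQsub hx) y (hQsub hy) hxy
            (hQc (Finset.mem_coe.mpr hx) (Finset.mem_coe.mpr hy) hxy)
        calc Q.card * (tA + tB) ≤ 1 * (tA + tB) := Nat.mul_le_mul_right _ hQ1
          _ = tA + tB := one_mul _
          _ ≤ k := htk
          _ ≤ k' := le_max_left _ _
  have hcA : A.card ≤ n := by
    have h1 : A.card + B.card = U.card := by
      rw [← hun, Finset.card_union_of_disjoint hdisj]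
    have := Finset.card_pos.mpr hBne
    omega
  obtain ⟨W, hWA, hWind, hWs⟩ := ih A k' ∅ (I ∪ X) m' hcA hHA
  rw [Finset.card_empty, zero_add, hsumS'] at hWs
  have hmaxeq : ∀ x ∈ W, max (alphaIn G (G.neighborSet x)) k' =
      max (alphaIn G (G.neighborSet x)) k := by
    intro x hx
    have hBN : (↑B : Set V) ⊆ G.neighborSet x := by
      intro b hb
      exact hac x (hWA hx) b hb
    have := alphaIn_mono (G := G) hBN
    rw [hk'def]
    omega
  refine ⟨W, hWA.trans hAU, hWind, ?_⟩
  rw [Finset.sum_congr rfl hmaxeq] at hWs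
  omega

open Classical in
lemma main_join {n : ℕ} (hP4 : IsEmpty (SimpleGraph.pathGraph 4 ↪g G))
    (ih : ∀ (U : Finset V) (k : ℕ) (F : Finset (Sym2 V)) (S : Finset V) (m : V → ℕ),
      U.card ≤ n → MainH G U k F S m → MainC G U k F S m)
    (U : Finset V) (k : ℕ) (F : Finset (Sym2 V)) (S : Finset V) (m : V → ℕ)
    (hH : MainH G U k F S m)
    (A B : Finset V) (hun : A ∪ B = U) (hdisj : Disjoint A B)
    (hAne : A.Nonempty) (hBne : B.Nonempty) (hcard : U.card ≤ n + 1)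
    (hac : ∀ a ∈ A, ∀ b ∈ B, G.Adj a b)
    (hFnB : ∀ e ∈ F, ¬ ∀ v ∈ e, v ∈ B) : MainC G U k F S m := by
  obtain ⟨hFU, hpair, hSU, hSF, hm1, hclq, hSadj⟩ := hH
  have hAU : A ⊆ U := hun ▸ Finset.subset_union_left
  set FA := F.filter (fun e => ∀ v ∈ e, v ∈ A) with hFAdef
  set FX := F.filter (fun e => ¬ ∀ v ∈ e, v ∈ A) with hFXdef
  have hcardF : FA.card + FX.card = F.card :=
    Finset.card_filter_add_card_filter_not _
  have hFXF : FX ⊆ F := Finset.filter_subset _ _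
  have hFAF : FA ⊆ F := Finset.filter_subset _ _
  have hXcross : ∀ e ∈ FX, ∃ a b, e = s(a, b) ∧ a ∈ A ∧ b ∈ B ∧ G.Adj a b := by
    intro e he
    have heF := Finset.mem_filter.mp he |>.1
    have hnA := Finset.mem_filter.mp he |>.2
    obtain ⟨x, y, rfl, hadj, hxU, hyU⟩ := hFU e heF
    have hx := Finset.mem_union.mp (hun ▸ hxU)
    have hy := Finset.mem_union.mp (hun ▸ hyU)
    rcases hx with hxA | hxB <;> rcases hy with hyA | hyB
    · exact absurd (by intro v hv; rcases Sym2.mem_iff.mp hv with rfl | rfl <;> assumption) hnA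
    · exact ⟨x, y, rfl, hxA, hyB, hadj⟩
    · exact ⟨y, x, Sym2.eq_swap, hyA, hxB, hadj.symm⟩
    · exact absurd (by intro v hv; rcases Sym2.mem_iff.mp hv with rfl | rfl <;> assumption)
        (hFnB _ heF)
  have hpairX : ∀ e ∈ FX, ∀ f ∈ FX, e ≠ f → ¬ G.IsClique {v | v ∈ e ∨ v ∈ f} :=
    fun e he f hf => hpair e (hFXF he) f (hFXF hf)
  have hcA : A.card ≤ n := by
    have h1 : A.card + B.card = U.card := by
      rw [← hun, Finset.card_union_of_disjoint hdisj]
    have := Finset.card_pos.mpr hBne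
    omega
  by_cases hFAe : FA = ∅
  · -- Case III : every edge is a cross edge
    have hX : ∀ e ∈ F, ∃ a b, e = s(a, b) ∧ a ∈ A ∧ b ∈ B ∧ G.Adj a b := by
      intro e he
      refine hXcross e (Finset.mem_filter.mpr ⟨he, fun hall => ?_⟩)
      have : e ∈ FA := Finset.mem_filter.mpr ⟨he, hall⟩
      rw [hFAe] at this
      exact absurd this (Finset.notMem_empty e)
    set SA := S ∩ A with hSAdef
    set SB := S ∩ B with hSBdef
    set tA := cliqueWt G SA m with htAdef
    set tB := cliqueWt G SB m with htBdef
    obtain ⟨IA, hIAsub, hIAind, hIAs⟩ := wcc hP4 SA m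
    obtain ⟨IB, hIBsub, hIBind, hIBs⟩ := wcc hP4 SB m
    have htk : tA + tB ≤ k := by
      obtain ⟨QA, hQA, hQAc, hQAs⟩ := cliqueWt_witness (G := G) SA m
      obtain ⟨QB, hQB, hQBc, hQBs⟩ := cliqueWt_witness (G := G) SB m
      have hQAA : QA ⊆ A := hQA.trans Finset.inter_subset_right
      have hQBB : QB ⊆ B := hQB.trans Finset.inter_subset_right
      have hdisjQ : Disjoint QA QB := hdisj.mono hQAA hQBB
      have hclqU : G.IsClique (↑(QA ∪ QB) : Set V) := by
        intro x hx y hy hxy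
        simp only [Finset.coe_union, Set.mem_union, Finset.mem_coe] at hx hy
        rcases hx with hx | hx <;> rcases hy with hy | hy
        · exact hQAc hx hy hxy
        · exact hac x (hQAA hx) y (hQBB hy)
        · exact (hac y (hQAA hy) x (hQBB hx)).symm
        · exact hQBc hx hy hxy
      have := hclq (QA ∪ QB)
        (Finset.union_subset (hQA.trans Finset.inter_subset_left)
          (hQB.trans Finset.inter_subset_left)) hclqU
      rwa [Finset.sum_union hdisjQ, hQAs, hQBs] at this
    have hsplitS : ∑ a ∈ S, m a = ∑ a ∈ SA, m a + ∑ a ∈ SB, m a :=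
      sum_split S A B m hun hdisj hSU
    have hmt : ∀ (J : Finset V) (t : ℕ), J ⊆ S ∩ A ∨ J ⊆ S ∩ B →
        True := fun _ _ _ => trivial
    rcases le_total IB.card IA.card with hord | hord
    · refine main_case3 ih U k F S m
        ⟨hFU, hpair, hSU, hSF, hm1, hclq, hSadj⟩ A B hun hdisj hAne hBne hcard hac hX
        IA tA tB hIAsub hIAind (fun a ha => ?_) htk ?_
      · have h1 := le_cliqueWt (G := G) (m := m)
          (Finset.singleton_subset_iff.mpr (hIAsub ha)) (singleton_clique a)
        rwa [Finset.sum_singleton] at h1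
      · calc ∑ a ∈ S, m a = ∑ a ∈ SA, m a + ∑ a ∈ SB, m a := hsplitS
          _ ≤ IA.card * tA + IB.card * tB := Nat.add_le_add hIAs hIBs
          _ ≤ IA.card * tA + IA.card * tB := by gcongr
          _ = IA.card * (tA + tB) := by ring
    · refine main_case3 ih U k F S m
        ⟨hFU, hpair, hSU, hSF, hm1, hclq, hSadj⟩ B A (by rw [Finset.union_comm]; exact hun)
        hdisj.symm hBne hAne hcard (fun b hb a ha => (hac a ha b hb).symm) ?_
        IB tB tA hIBsub hIBind (fun a ha => ?_) (by omega) ?_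
      · intro e he
        obtain ⟨a, b, hab, haA, hbB, hadj⟩ := hX e he
        exact ⟨b, a, hab.trans Sym2.eq_swap, hbB, haA, hadj.symm⟩
      · have h1 := le_cliqueWt (G := G) (m := m)
          (Finset.singleton_subset_iff.mpr (hIBsub ha)) (singleton_clique a)
        rwa [Finset.sum_singleton] at h1
      · calc ∑ a ∈ S, m a = ∑ a ∈ SA, m a + ∑ a ∈ SB, m a := hsplitS
          _ ≤ IA.card * tA + IB.card * tB := Nat.add_le_add hIAs hIBs
          _ ≤ IB.card * tA + IB.card * tB := by gcongr
          _ = IB.card * (tB + tA) := by ring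
  · -- Case I : some edge inside A
    obtain ⟨e0, he0⟩ := Finset.nonempty_iff_ne_empty.mpr hFAe
    have he0F := Finset.mem_filter.mp he0 |>.1
    have he0A := Finset.mem_filter.mp he0 |>.2
    obtain ⟨x0, y0, he0xy, hadj0, -, -⟩ := hFU e0 he0F
    have hx0A : x0 ∈ A := he0A x0 (by rw [he0xy]; exact Sym2.mem_mk_left x0 y0)
    have hy0A : y0 ∈ A := he0A y0 (by rw [he0xy]; exact Sym2.mem_mk_right x0 y0)
    have hSA : S ⊆ A := by
      intro a haS
      rcases Finset.mem_union.mp (hun ▸ hSU haS) with h | h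
      · exact h
      · exfalso
        exact hSadj a haS e0 he0F x0 y0 he0xy
          ⟨(hac x0 hx0A a h).symm, (hac y0 hy0A a h).symm⟩
    set cnt : V → ℕ := fun a => (FX.filter (fun e => a ∈ e)).card with hcntdef
    set X := A.filter (fun a => ∃ e ∈ FX, a ∈ e) with hXdef
    have hXA : X ⊆ A := Finset.filter_subset _ _
    have hSXdisj : Disjoint S X := by
      rw [Finset.disjoint_left]
      intro a haS haX
      obtain ⟨-, e, heFX, hae⟩ := Finset.mem_filter.mp haX
      exact hSF a haS e (hFXF heFX) hae
    have hSXnadj : ∀ a ∈ S, ∀ a' ∈ X, ¬ G.Adj a a' := by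
      intro a haS a' haX
      obtain ⟨ha'A, e, heFX, hae⟩ := Finset.mem_filter.mp haX
      obtain ⟨c, b, he, hcA, hbB, -⟩ := hXcross e heFX
      have ha'c : a' = c := by
        rcases Sym2.mem_iff.mp (he ▸ hae) with h | h
        · exact h
        · exact absurd (h ▸ hbB) (fun hb => Finset.disjoint_left.mp hdisj ha'A hb)
      subst ha'c
      intro hadj
      exact hSadj a haS e (hFXF heFX) a' b he ⟨hadj, hac a (hSA haS) b hbB⟩
    have hfibdisj : ∀ a ∈ X, ∀ a' ∈ X, a ≠ a' →
        Disjoint (FX.filter (fun e => a ∈ e)) (FX.filter (fun e => a' ∈ e)) := by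
      intro a ha a' ha' hne
      rw [Finset.disjoint_left]
      intro e he he'
      obtain ⟨c, b, rfl, hcA, hbB, -⟩ := hXcross e (Finset.mem_filter.mp he |>.1)
      have h1 : a = c ∨ a = b := Sym2.mem_iff.mp (Finset.mem_filter.mp he |>.2)
      have h2 : a' = c ∨ a' = b := Sym2.mem_iff.mp (Finset.mem_filter.mp he' |>.2)
      have hab : a ≠ b := fun h => Finset.disjoint_left.mp hdisj (hXA ha) (h ▸ hbB)
      have hab' : a' ≠ b := fun h => Finset.disjoint_left.mp hdisj (hXA ha') (h ▸ hbB)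
      rcases h1 with rfl | h1
      · rcases h2 with rfl | h2
        · exact hne rfl
        · exact hab' h2
      · exact hab h1
    have hbiUn : X.biUnion (fun a => FX.filter (fun e => a ∈ e)) = FX := by
      apply Finset.Subset.antisymm
      · intro e he
        obtain ⟨a, -, he'⟩ := Finset.mem_biUnion.mp he
        exact Finset.mem_filter.mp he' |>.1
      · intro e he
        obtain ⟨a, b, rfl, haA, hbB, -⟩ := hXcross e he
        refine Finset.mem_biUnion.mpr ⟨a, ?_, Finset.mem_filter.mpr ⟨he, Sym2.mem_mk_left a b⟩⟩
        exact Finset.mem_filter.mpr ⟨haA, _, he, Sym2.mem_mk_left a b⟩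
    have hsumX : ∑ a ∈ X, cnt a = FX.card := by
      rw [hcntdef, ← Finset.card_biUnion hfibdisj, hbiUn]
    have hXFA1 : ∀ a ∈ X, ∀ e ∈ FA, a ∉ e := by
      intro a haX e heFA hae
      obtain ⟨ha'A, f, hfFX, haf⟩ := Finset.mem_filter.mp haX
      obtain ⟨c, b, hf, hcA, hbB, hadjcb⟩ := hXcross f hfFX
      have hacf : a = c := by
        rcases Sym2.mem_iff.mp (hf ▸ haf) with h | h
        · exact h
        · exact absurd (h ▸ hbB) (fun hb => Finset.disjoint_left.mp hdisj ha'A hb)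
      subst hacf
      have heF := Finset.mem_filter.mp heFA |>.1
      have heA := Finset.mem_filter.mp heFA |>.2
      obtain ⟨x, y, hexy, hadjxy, -, -⟩ := hFU e heF
      have hxA : x ∈ A := heA x (by rw [hexy]; exact Sym2.mem_mk_left x y)
      have hyA : y ∈ A := heA y (by rw [hexy]; exact Sym2.mem_mk_right x y)
      have hbe : b ∉ e := fun hbe =>
        Finset.disjoint_left.mp hdisj (heA b hbe) hbB
      have hef : e ≠ f := fun h =>
        hbe (h ▸ (by rw [hf]; exact Sym2.mem_mk_right a b))
      rcases Sym2.mem_iff.mp (hexy ▸ hae) with h | h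
      · subst h
        exact hpair e heF f (hFXF hfFX) hef
          (clique_pair hexy hf hadjxy hadjcb (fun h => absurd rfl h)
            (fun _ => hac a hxA b hbB) (fun _ => hadjxy.symm)
            (fun _ => hac y hyA b hbB))
      · subst h
        exact hpair e heF f (hFXF hfFX) hef
          (clique_pair hexy hf hadjxy hadjcb (fun _ => hadjxy)
            (fun _ => hac x hxA b hbB) (fun h => absurd rfl h)
            (fun _ => hac a hyA b hbB))
    have hXFA2 : ∀ a ∈ X, ∀ e ∈ FA, ∀ x y, e = s(x, y) → ¬(G.Adj a x ∧ G.Adj a y) := by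
      rintro a haX e heFA x y hexy ⟨hax, hay⟩
      obtain ⟨ha'A, f, hfFX, haf⟩ := Finset.mem_filter.mp haX
      obtain ⟨c, b, hf, hcA, hbB, hadjcb⟩ := hXcross f hfFX
      have hacf : a = c := by
        rcases Sym2.mem_iff.mp (hf ▸ haf) with h | h
        · exact h
        · exact absurd (h ▸ hbB) (fun hb => Finset.disjoint_left.mp hdisj ha'A hb)
      subst hacf
      have heF := Finset.mem_filter.mp heFA |>.1
      have heA := Finset.mem_filter.mp heFA |>.2
      obtain ⟨x', y', hexy', hadjxy, -, -⟩ := hFU e heF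
      have hxA : x ∈ A := heA x (by rw [hexy]; exact Sym2.mem_mk_left x y)
      have hyA : y ∈ A := heA y (by rw [hexy]; exact Sym2.mem_mk_right x y)
      have hadjxy2 : G.Adj x y := by
        rw [← SimpleGraph.mem_edgeSet, ← hexy]
        rw [← SimpleGraph.mem_edgeSet, ← hexy'] at hadjxy
        exact hadjxy
      have hae : a ∉ e := hXFA1 a haX e heFA
      have hef : e ≠ f := fun h =>
        hae (h ▸ (by rw [hf]; exact Sym2.mem_mk_left a b))
      exact hpair e heF f (hFXF hfFX) hef
        (clique_pair hexy hf hadjxy2 hadjcb (fun _ => hax.symm)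
          (fun _ => hac x hxA b hbB) (fun _ => hay.symm)
          (fun _ => hac y hyA b hbB))
    set k' := max k (alphaIn G ↑B) with hk'def
    set m' : V → ℕ := fun a => if a ∈ X then cnt a else m a with hm'def
    have hsumS' : ∑ a ∈ S ∪ X, m' a = ∑ a ∈ S, m a + FX.card := by
      rw [Finset.sum_union hSXdisj]
      have h1 : ∑ a ∈ S, m' a = ∑ a ∈ S, m a := by
        refine Finset.sum_congr rfl (fun a ha => ?_)
        rw [hm'def]; simp only [if_neg (Finset.disjoint_left.mp hSXdisj ha)]
      have h2 : ∑ a ∈ X, m' a = FX.card := by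
        rw [← hsumX]
        refine Finset.sum_congr rfl (fun a ha => ?_)
        rw [hm'def]; simp only [if_pos ha]
      omega
    have hHA : MainH G A k' FA (S ∪ X) m' := by
      refine ⟨?_, ?_, Finset.union_subset hSA hXA, ?_, ?_, ?_, ?_⟩
      · intro e he
        have heF := Finset.mem_filter.mp he |>.1
        have heA := Finset.mem_filter.mp he |>.2
        obtain ⟨x, y, rfl, hadj, -, -⟩ := hFU e heF
        exact ⟨x, y, rfl, hadj, heA x (Sym2.mem_mk_left x y), heA y (Sym2.mem_mk_right x y)⟩
      · intro e he f hf hne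
        exact hpair e (hFAF he) f (hFAF hf) hne
      · intro a ha e he
        rcases Finset.mem_union.mp ha with h | h
        · exact hSF a h e (hFAF he)
        · exact hXFA1 a h e he
      · intro a ha
        rcases Finset.mem_union.mp ha with h | h
        · rw [hm'def]; simp only [if_neg (Finset.disjoint_left.mp hSXdisj h)]
          exact hm1 a h
        · obtain ⟨-, e, heFX, hae⟩ := Finset.mem_filter.mp h
          have : 0 < cnt a := Finset.card_pos.mpr ⟨e, Finset.mem_filter.mpr ⟨heFX, hae⟩⟩
          rw [hm'def]; simp only [if_pos h]; omega
      · intro Q hQ hQc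
        by_cases hQX : ∃ a ∈ Q, a ∈ X
        · obtain ⟨a0, ha0Q, ha0X⟩ := hQX
          have hQsub : Q ⊆ X := by
            intro a' ha'
            rcases Finset.mem_union.mp (hQ ha') with h | h
            · exfalso
              have hne : a' ≠ a0 := fun heq =>
                Finset.disjoint_left.mp hSXdisj (heq ▸ h) (heq ▸ ha0X)
              exact hSXnadj a' h a0 ha0X
                (hQc (Finset.mem_coe.mpr ha') (Finset.mem_coe.mpr ha0Q) hne)
            · exact h
          have heq : ∑ a ∈ Q, m' a = ∑ a ∈ Q, cnt a := by
            refine Finset.sum_congr rfl (fun a ha => ?_)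
            rw [hm'def]; simp only [if_pos (hQsub ha)]
          rw [heq]
          calc ∑ a ∈ Q, cnt a ≤ alphaIn G ↑B :=
                xcount hac hBne hdisj FX hXcross hpairX Q (hQsub.trans hXA) hQc
            _ ≤ k' := le_max_right _ _
        · push_neg at hQX
          have hQsub : Q ⊆ S := by
            intro a' ha'
            rcases Finset.mem_union.mp (hQ ha') with h | h
            · exact h
            · exact absurd h (hQX a' ha')
          have heq : ∑ a ∈ Q, m' a = ∑ a ∈ Q, m a := by
            refine Finset.sum_congr rfl (fun a ha => ?_)
            rw [hm'def]; simp only [if_neg (hQX a ha)]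
          rw [heq]
          exact (hclq Q hQsub hQc).trans (le_max_left _ _)
      · intro a ha e he x y hexy
        rcases Finset.mem_union.mp ha with h | h
        · exact hSadj a h e (hFAF he) x y hexy
        · exact hXFA2 a h e he x y hexy
    obtain ⟨W, hWA, hWind, hWs⟩ := ih A k' FA (S ∪ X) m' hcA hHA
    rw [hsumS'] at hWs
    have hmaxeq : ∀ x ∈ W, max (alphaIn G (G.neighborSet x)) k' =
        max (alphaIn G (G.neighborSet x)) k := by
      intro x hx
      have hBN : (↑B : Set V) ⊆ G.neighborSet x := by
        intro b hb
        exact hac x (hWA hx) b hb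
      have := alphaIn_mono (G := G) hBN
      rw [hk'def]
      omega
    refine ⟨W, hWA.trans hAU, hWind, ?_⟩
    rw [Finset.sum_congr rfl hmaxeq] at hWs
    omega

lemma main (hP4 : IsEmpty (SimpleGraph.pathGraph 4 ↪g G)) :
    ∀ (n : ℕ) (U : Finset V) (k : ℕ) (F : Finset (Sym2 V)) (S : Finset V) (m : V → ℕ),
      U.card ≤ n → MainH G U k F S m → MainC G U k F S m := by
  intro n
  induction n with
  | zero =>
    intro U k F S m hc hH
    exact main_base U k F S m hH (by omega)
  | succ n ih =>
    intro U k F S m hc hH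
    by_cases hU1 : U.card ≤ 1
    · exact main_base U k F S m hH hU1
    · obtain ⟨A, B, hun, hdisj, hAne, hBne, hsplit⟩ := seinsche hP4 U (by omega)
      rcases hsplit with hnc | hac
      · exact main_nocross ih U k F S m hH A B hun hdisj hAne hBne hc hnc
      · classical
        by_cases hFB : ∀ e ∈ F, ¬ ∀ v ∈ e, v ∈ B
        · exact main_join hP4 ih U k F S m hH A B hun hdisj hAne hBne hc hac hFB
        · push_neg at hFB
          obtain ⟨f0, hf0F, hf0B⟩ := hFB
          obtain ⟨hFU, hpair, hSU, hSF, hm1, hclq, hSadj⟩ := hH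
          obtain ⟨z, w, hf0zw, hadjzw, -, -⟩ := hFU f0 hf0F
          have hzB : z ∈ B := hf0B z (by rw [hf0zw]; exact Sym2.mem_mk_left z w)
          have hwB : w ∈ B := hf0B w (by rw [hf0zw]; exact Sym2.mem_mk_right z w)
          have hFA : ∀ e ∈ F, ¬ ∀ v ∈ e, v ∈ A := by
            intro e heF hallA
            obtain ⟨x, y, hexy, hadjxy, -, -⟩ := hFU e heF
            have hxA : x ∈ A := hallA x (by rw [hexy]; exact Sym2.mem_mk_left x y)
            have hyA : y ∈ A := hallA y (by rw [hexy]; exact Sym2.mem_mk_right x y)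
            have hef : e ≠ f0 := fun h => by
              have : x ∈ B := hf0B x (h ▸ (hexy ▸ Sym2.mem_mk_left x y))
              exact Finset.disjoint_left.mp hdisj hxA this
            exact hpair e heF f0 hf0F hef
              (clique_pair hexy hf0zw hadjxy hadjzw (fun _ => hac x hxA z hzB)
                (fun _ => hac x hxA w hwB) (fun _ => hac y hyA z hzB)
                (fun _ => hac y hyA w hwB))
          exact main_join hP4 ih U k F S m
            ⟨hFU, hpair, hSU, hSF, hm1, hclq, hSadj⟩ B A
            (by rw [Finset.union_comm]; exact hun) hdisj.symm hBne hAne hc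
            (fun b hb a ha => (hac a ha b hb).symm) hFA

lemma sym2_rep (e : Sym2 V) : ∃ x y, e = s(x, y) := by
  induction e with
  | _ x y => exact ⟨x, y, rfl⟩

open Classical in
lemma indepNum_induce (A : Set V) : ECG.indepNum (G.induce A) = alphaIn G A := by
  apply le_antisymm
  · refine csSup_le ⟨0, ∅, by simp [ECG.IsIndepSet], rfl⟩ ?_
    rintro n ⟨T, hT, rfl⟩
    rw [← Finset.card_map ⟨Subtype.val, Subtype.val_injective⟩]
    refine le_alphaIn ?_ ?_
    · intro x hx
      rw [Finset.coe_map] at hx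
      obtain ⟨⟨x', hx'A⟩, -, rfl⟩ := hx
      exact hx'A
    · intro x hx y hy hxy hadj
      obtain ⟨⟨x', hx'A⟩, hx'T, rfl⟩ := Finset.mem_map.mp hx
      obtain ⟨⟨y', hy'A⟩, hy'T, rfl⟩ := Finset.mem_map.mp hy
      have hne : (⟨x', hx'A⟩ : ↥A) ≠ ⟨y', hy'A⟩ := fun h => hxy (congrArg Subtype.val h)
      refine hT (Finset.mem_coe.mpr hx'T) (Finset.mem_coe.mpr hy'T) hne ?_
      simpa using hadj
  · refine csSup_le (alphaIn_set_nonempty A) ?_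
    rintro n ⟨T, hTA, hTind, rfl⟩
    have hmem : ∀ x ∈ T, x ∈ A := fun x hx => hTA (Finset.mem_coe.mpr hx)
    set T' : Finset ↥A := T.attach.map
      ⟨fun x => (⟨x.1, hmem x.1 x.2⟩ : ↥A), fun a b h => Subtype.ext (Subtype.mk_eq_mk.mp h)⟩
      with hT'def
    have hcard : T'.card = T.card := by rw [hT'def, Finset.card_map, Finset.card_attach]
    have hbdd : BddAbove {n | ∃ S : Finset ↥A, ECG.IsIndepSet (G.induce A) ↑S ∧ S.card = n} := by
      haveI : Fintype ↥A := Set.Finite.fintype (Set.toFinite A)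
      exact ⟨Fintype.card ↥A, by rintro n ⟨S, -, rfl⟩; exact S.card_le_univ⟩
    refine hcard ▸ le_csSup hbdd ⟨T', ?_, rfl⟩
    intro x hx y hy hxy hadj
    rw [Finset.mem_coe, hT'def, Finset.mem_map] at hx hy
    obtain ⟨⟨x', hx'T⟩, -, rfl⟩ := hx
    obtain ⟨⟨y', hy'T⟩, -, rfl⟩ := hy
    have hne : x' ≠ y' := fun h => hxy (Subtype.ext h)
    exact hTind x' hx'T y' hy'T hne hadj

end AuxECG

/-- For a finite cograph `G` (no induced path on four vertices),
`α'(G) = max { Σ_{x ∈ W} d'(x) : W an independent set of vertices of G }`, where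
`d'(x)` is the independence number of the subgraph induced by the open neighborhood
of `x` and `α'(G) = α(K_e(G))`. -/
theorem alpha'_eq_max_sum_of_cograph {V : Type*} [Fintype V] (G : SimpleGraph V)
    (hcograph : IsEmpty (SimpleGraph.pathGraph 4 ↪g G)) :
    ECG.indepNum (ECG.edgeCliqueGraph G) =
      sSup {n | ∃ W : Finset V, ECG.IsIndepSet G ↑W ∧
        n = ∑ x ∈ W, ECG.indepNum (G.induce (G.neighborSet x))} := by
  classical
  haveI : Fintype (Sym2 V) := inferInstance
  have hLne : {n | ∃ S : Finset ↥G.edgeSet,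
      ECG.IsIndepSet (ECG.edgeCliqueGraph G) ↑S ∧ S.card = n}.Nonempty :=
    ⟨0, ∅, by simp [ECG.IsIndepSet], rfl⟩
  have hLbdd : BddAbove {n | ∃ S : Finset ↥G.edgeSet,
      ECG.IsIndepSet (ECG.edgeCliqueGraph G) ↑S ∧ S.card = n} := by
    haveI : Fintype ↥G.edgeSet := Set.Finite.fintype (Set.toFinite _)
    exact ⟨Fintype.card ↥G.edgeSet, by rintro n ⟨S, -, rfl⟩; exact S.card_le_univ⟩
  have hRne : {n | ∃ W : Finset V, ECG.IsIndepSet G ↑W ∧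
      n = ∑ x ∈ W, ECG.indepNum (G.induce (G.neighborSet x))}.Nonempty :=
    ⟨0, ∅, by simp [ECG.IsIndepSet], by simp⟩
  have hRbdd : BddAbove {n | ∃ W : Finset V, ECG.IsIndepSet G ↑W ∧
      n = ∑ x ∈ W, ECG.indepNum (G.induce (G.neighborSet x))} := by
    refine ⟨∑ x ∈ Finset.univ, ECG.indepNum (G.induce (G.neighborSet x)), ?_⟩
    rintro n ⟨W, -, rfl⟩
    exact Finset.sum_le_sum_of_subset (Finset.subset_univ W)
  apply le_antisymm
  · -- α'(G) ≤ max
    refine csSup_le hLne ?_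
    rintro n ⟨S, hSind, rfl⟩
    set F : Finset (Sym2 V) := S.map ⟨Subtype.val, Subtype.val_injective⟩ with hFdef
    have hFcard : F.card = S.card := Finset.card_map _
    have hH : AuxECG.MainH G Finset.univ 0 F ∅ (fun _ => 1) := by
      refine ⟨?_, ?_, Finset.empty_subset _, ?_, ?_, ?_, ?_⟩
      · intro e he
        obtain ⟨⟨e', he'⟩, -, rfl⟩ := Finset.mem_map.mp he
        obtain ⟨x, y, rfl⟩ := AuxECG.sym2_rep e'
        exact ⟨x, y, rfl, G.mem_edgeSet.mp he', Finset.mem_univ x, Finset.mem_univ y⟩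
      · intro e he f hf hne hclique
        obtain ⟨⟨e', he'⟩, heS, rfl⟩ := Finset.mem_map.mp he
        obtain ⟨⟨f', hf'⟩, hfS, rfl⟩ := Finset.mem_map.mp hf
        have hne' : (⟨e', he'⟩ : ↥G.edgeSet) ≠ ⟨f', hf'⟩ :=
          fun h => hne (congrArg Subtype.val h)
        exact hSind (Finset.mem_coe.mpr heS) (Finset.mem_coe.mpr hfS) hne' (⟨hne', hclique⟩ : _ ∧ _)
      · intro a ha; exact absurd ha (Finset.notMem_empty a)
      · intro a ha; exact absurd ha (Finset.notMem_empty a)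
      · intro Q hQ hQc
        rw [Finset.subset_empty.mp hQ, Finset.sum_empty]
      · intro a ha; exact absurd ha (Finset.notMem_empty a)
    obtain ⟨W, -, hWind, hWs⟩ :=
      AuxECG.main hcograph (Fintype.card V) Finset.univ 0 F ∅ (fun _ => 1)
        (le_of_eq (Finset.card_univ)) hH
    rw [Finset.sum_empty, add_zero] at hWs
    have hWs' : F.card ≤ ∑ x ∈ W, ECG.indepNum (G.induce (G.neighborSet x)) := by
      refine hWs.trans (le_of_eq (Finset.sum_congr rfl fun x _ => ?_))
      rw [AuxECG.indepNum_induce, Nat.max_zero]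
    have hWind' : ECG.IsIndepSet G ↑W := by
      intro x hx y hy hxy
      exact hWind x (Finset.mem_coe.mp hx) y (Finset.mem_coe.mp hy) hxy
    have hfin : S.card ≤ ∑ x ∈ W, ECG.indepNum (G.induce (G.neighborSet x)) := by
      rw [← hFcard]; exact hWs'
    exact hfin.trans (le_csSup hRbdd ⟨W, hWind', rfl⟩)
  · -- max ≤ α'(G)
    refine csSup_le hRne ?_
    rintro n ⟨W, hWind, rfl⟩
    have hwit : ∀ x : V, ∃ T : Finset V, ↑T ⊆ G.neighborSet x ∧ AuxECG.IndepF G T ∧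
        T.card = AuxECG.alphaIn G (G.neighborSet x) :=
      fun x => AuxECG.alphaIn_witness _
    choose T hTsub hTind hTcard using hwit
    set F0 : Finset (Sym2 V) := W.biUnion (fun x => (T x).image (fun y => s(x, y))) with hF0def
    have hTadj : ∀ x, ∀ y ∈ T x, G.Adj x y := by
      intro x y hy
      exact hTsub x (Finset.mem_coe.mpr hy)
    have himgcard : ∀ x, ((T x).image (fun y => s(x, y))).card = (T x).card := by
      intro x
      refine Finset.card_image_of_injOn ?_
      intro y hy y' hy' heq
      rcases Sym2.eq_iff.mp heq with ⟨-, h⟩ | ⟨h1, h2⟩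
      · exact h
      · exfalso
        rw [Finset.mem_coe] at hy'
        exact G.loopless.irrefl x (h1 ▸ hTadj x y' hy')
    have hdisj : ∀ x ∈ W, ∀ x' ∈ W, x ≠ x' →
        Disjoint ((T x).image (fun y => s(x, y))) ((T x').image (fun y => s(x', y))) := by
      intro x hx x' hx' hne
      rw [Finset.disjoint_left]
      intro e he he'
      obtain ⟨y, hy, rfl⟩ := Finset.mem_image.mp he
      obtain ⟨y', hy', heq⟩ := Finset.mem_image.mp he'
      rcases Sym2.eq_iff.mp heq with ⟨h1, -⟩ | ⟨h1, h2⟩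
      · exact hne h1.symm
      · exact hWind (Finset.mem_coe.mpr hx') (Finset.mem_coe.mpr hx) (Ne.symm hne)
          (h2 ▸ hTadj x' y' hy')
    have hF0card : F0.card = ∑ x ∈ W, AuxECG.alphaIn G (G.neighborSet x) := by
      rw [hF0def, Finset.card_biUnion hdisj]
      exact Finset.sum_congr rfl fun x _ => (himgcard x).trans (hTcard x)
    have hF0mem : ∀ e ∈ F0, ∃ x ∈ W, ∃ y ∈ T x, e = s(x, y) := by
      intro e he
      obtain ⟨x, hx, he'⟩ := Finset.mem_biUnion.mp he
      obtain ⟨y, hy, rfl⟩ := Finset.mem_image.mp he'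
      exact ⟨x, hx, y, hy, rfl⟩
    have hF0edge : ∀ e ∈ F0, e ∈ G.edgeSet := by
      intro e he
      obtain ⟨x, -, y, hy, rfl⟩ := hF0mem e he
      exact G.mem_edgeSet.mpr (hTadj x y hy)
    have hF0pair : ∀ e ∈ F0, ∀ f ∈ F0, e ≠ f → ¬ G.IsClique {v | v ∈ e ∨ v ∈ f} := by
      intro e he f hf hne hclique
      obtain ⟨x, hxW, y, hy, rfl⟩ := hF0mem e he
      obtain ⟨x', hx'W, y', hy', rfl⟩ := hF0mem f hf
      by_cases hxx : x = x'
      · subst hxx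
        have hyy : y ≠ y' := fun h => hne (h ▸ rfl)
        have hadj : G.Adj y y' := hclique
          (Or.inl (Sym2.mem_mk_right x y)) (Or.inr (Sym2.mem_mk_right x y')) hyy
        exact hTind x y hy y' hy' hyy hadj
      · have hadj : G.Adj x x' := hclique
          (Or.inl (Sym2.mem_mk_left x y)) (Or.inr (Sym2.mem_mk_left x' y')) hxx
        exact hWind (Finset.mem_coe.mpr hxW) (Finset.mem_coe.mpr hx'W) hxx hadj
    set Fe : Finset ↥G.edgeSet := F0.attach.map
      ⟨fun e => (⟨e.1, hF0edge e.1 e.2⟩ : ↥G.edgeSet),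
        fun a b h => Subtype.ext (Subtype.mk_eq_mk.mp h)⟩ with hFedef
    have hFecard : Fe.card = F0.card := by rw [hFedef, Finset.card_map, Finset.card_attach]
    have hFeind : ECG.IsIndepSet (ECG.edgeCliqueGraph G) ↑Fe := by
      intro a ha b hb hne hadj
      rw [Finset.mem_coe, hFedef, Finset.mem_map] at ha hb
      obtain ⟨⟨e, heF0⟩, -, rfl⟩ := ha
      obtain ⟨⟨f, hfF0⟩, -, rfl⟩ := hb
      have hnef : e ≠ f := fun h => hne (Subtype.ext h)
      exact hF0pair e heF0 f hfF0 hnef (hadj : _ ∧ _).2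
    have heq : ∑ x ∈ W, ECG.indepNum (G.induce (G.neighborSet x)) = Fe.card := by
      rw [hFecard, hF0card]
      exact Finset.sum_congr rfl fun x _ => AuxECG.indepNum_induce _
    rw [heq]
    exact le_csSup hLbdd ⟨Fe, hFeind, rfl⟩
end

section
/- For the 5-cycle C5, α'(C5) = 5, while for every independent set W of vertices of C5 one has Σ_{x∈W} d'(x) ≤ 4; hence the equality α'(G) = max{ Σ_{x∈W} d'(x) : W independent in G } fails for G = C5. -/
-- Auxiliary lemmas
namespace ECG

lemma indepNum_le {V : Type*} (G : SimpleGraph V) (n : ℕ)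
    (h : ∀ S : Finset V, IsIndepSet G ↑S → S.card ≤ n) : indepNum G ≤ n := by
  have hne : {n | ∃ S : Finset V, IsIndepSet G ↑S ∧ S.card = n}.Nonempty :=
    ⟨0, ∅, by simp [IsIndepSet], rfl⟩
  apply csSup_le hne
  rintro m ⟨S, hS, rfl⟩
  exact h S hS

lemma le_indepNum {V : Type*} (G : SimpleGraph V) (n : ℕ) (S : Finset V)
    (hS : IsIndepSet G ↑S) (hc : S.card = n)
    (hb : ∀ T : Finset V, IsIndepSet G ↑T → T.card ≤ n) : n ≤ indepNum G := by
  have hbdd : BddAbove {n | ∃ S : Finset V, IsIndepSet G ↑S ∧ S.card = n} := by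
    refine ⟨n, ?_⟩
    rintro m ⟨T, hT, rfl⟩
    exact hb T hT
  exact le_csSup hbdd ⟨S, hS, hc⟩

end ECG

open SimpleGraph

lemma C5_triangle_free : ∀ a b c : Fin 5, (cycleGraph 5).Adj a b →
    (cycleGraph 5).Adj a c → (cycleGraph 5).Adj b c → False := by decide

lemma ecg_bot : ∀ e f : (cycleGraph 5).edgeSet,
    ¬ (ECG.edgeCliqueGraph (cycleGraph 5)).Adj e f := by
  rintro ⟨e, he⟩ ⟨f, hf⟩ ⟨hne, hcl⟩
  induction e using Sym2.inductionOn with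
  | hf a b =>
  induction f using Sym2.inductionOn with
  | hf c d =>
  have hab : (cycleGraph 5).Adj a b := he
  have hcd : (cycleGraph 5).Adj c d := hf
  have hne' : s(a, b) ≠ s(c, d) := by simpa [Subtype.ext_iff] using hne
  have hmem : ∀ v, v ∈ ({v | v ∈ (s(a,b) : Sym2 (Fin 5)) ∨ v ∈ (s(c,d) : Sym2 (Fin 5))} : Set (Fin 5)) ↔ (v = a ∨ v = b) ∨ (v = c ∨ v = d) := by
    intro v; simp [Sym2.mem_iff]
  have key : (c ≠ a ∧ c ≠ b) ∨ (d ≠ a ∧ d ≠ b) := by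
    by_cases h1 : c = a
    · subst h1
      right
      constructor
      · exact fun h => hcd.ne (h.symm)
      · intro h; subst h; exact hne' rfl
    · by_cases h2 : c = b
      · subst h2
        right
        constructor
        · intro h; subst h; exact hne' (Sym2.eq_swap)
        · exact fun h => hcd.ne h.symm
      · exact Or.inl ⟨h1, h2⟩
  rcases key with ⟨h1, h2⟩ | ⟨h1, h2⟩
  · have hac : (cycleGraph 5).Adj a c := hcl (by rw [hmem]; tauto) (by rw [hmem]; tauto) (Ne.symm h1)
    have hbc : (cycleGraph 5).Adj b c := hcl (by rw [hmem]; tauto) (by rw [hmem]; tauto) (Ne.symm h2)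
    exact C5_triangle_free a b c hab hac hbc
  · have hac : (cycleGraph 5).Adj a d := hcl (by rw [hmem]; tauto) (by rw [hmem]; tauto) (Ne.symm h1)
    have hbc : (cycleGraph 5).Adj b d := hcl (by rw [hmem]; tauto) (by rw [hmem]; tauto) (Ne.symm h2)
    exact C5_triangle_free a b d hab hac hbc

lemma card_edgeSet_C5 : Fintype.card (cycleGraph 5).edgeSet = 5 := by
  rw [← SimpleGraph.edgeFinset_card]
  decide

lemma W_card_le : ∀ W : Finset (Fin 5),
    (∀ a ∈ W, ∀ b ∈ W, a ≠ b → ¬ (cycleGraph 5).Adj a b) → W.card ≤ 2 := by decide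


/-- For the 5-cycle `C₅`, `α'(C₅) = 5`, while every independent set `W`
of vertices of `C₅` satisfies `Σ_{x ∈ W} d'(x) ≤ 4`; hence the cograph formula fails
for `C₅`. -/
theorem cycleGraph_five_counterexample :
    ECG.indepNum (ECG.edgeCliqueGraph (SimpleGraph.cycleGraph 5)) = 5 ∧
      ∀ W : Finset (Fin 5), ECG.IsIndepSet (SimpleGraph.cycleGraph 5) ↑W →
        ∑ x ∈ W, ECG.indepNum ((SimpleGraph.cycleGraph 5).induce
          ((SimpleGraph.cycleGraph 5).neighborSet x)) ≤ 4 := by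
  have hbound : ∀ T : Finset (cycleGraph 5).edgeSet,
      ECG.IsIndepSet (ECG.edgeCliqueGraph (cycleGraph 5)) ↑T → T.card ≤ 5 := by
    intro T _
    calc T.card ≤ Fintype.card (cycleGraph 5).edgeSet := T.card_le_univ
    _ = 5 := card_edgeSet_C5
  constructor
  · apply le_antisymm
    · exact ECG.indepNum_le _ 5 hbound
    · refine ECG.le_indepNum _ 5 Finset.univ ?_ ?_ hbound
      · intro a _ b _ hne hadj
        exact ecg_bot a b hadj
      · rw [Finset.card_univ]; exact card_edgeSet_C5
  · intro W hW
    have hWc : W.card ≤ 2 := by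
      apply W_card_le
      intro a ha b hb hne
      exact hW (by simpa using ha) (by simpa using hb) hne
    have hd : ∀ x : Fin 5, ECG.indepNum ((cycleGraph 5).induce
        ((cycleGraph 5).neighborSet x)) ≤ 2 := by
      intro x
      apply ECG.indepNum_le
      intro S _
      calc S.card ≤ Fintype.card ((cycleGraph 5).neighborSet x) := S.card_le_univ
      _ = (cycleGraph 5).degree x := (cycleGraph 5).card_neighborSet_eq_degree x
      _ = 2 := cycleGraph_degree_three_le
    calc ∑ x ∈ W, ECG.indepNum ((cycleGraph 5).induce ((cycleGraph 5).neighborSet x))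
        ≤ ∑ _x ∈ W, 2 := Finset.sum_le_sum fun x _ => hd x
    _ = 2 * W.card := by rw [Finset.sum_const]; ring
    _ ≤ 4 := by omega
end

section
/- Let G be a finite simple graph such that for every vertex v the subgraph of G induced by the open neighborhood N(v) is bipartite (i.e. G has no odd wheel). Then for every vertex e of the edge-clique graph K_e(G), the subgraph of K_e(G) induced by the neighborhood of e is either empty or a matching; that is, it has maximum degree at most 1. -/
section Aux

variable {V : Type*}

lemma aux_noK4 (G : SimpleGraph V)
    (h : ∀ v : V, (G.induce (G.neighborSet v)).Colorable 2)
    {a b c d : V} (hbc : G.Adj b c) (hbd : G.Adj b d)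
    (hcd : G.Adj c d) (hab : G.Adj a b) (hac : G.Adj a c) (had : G.Adj a d) : False := by
  obtain ⟨C⟩ := h a
  have hb : b ∈ G.neighborSet a := hab
  have hc : c ∈ G.neighborSet a := hac
  have hd : d ∈ G.neighborSet a := had
  have h1 : C ⟨b, hb⟩ ≠ C ⟨c, hc⟩ := C.valid hbc
  have h2 : C ⟨b, hb⟩ ≠ C ⟨d, hd⟩ := C.valid hbd
  have h3 : C ⟨c, hc⟩ ≠ C ⟨d, hd⟩ := C.valid hcd
  have b1 := (C ⟨b, hb⟩).isLt
  have b2 := (C ⟨c, hc⟩).isLt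
  have b3 := (C ⟨d, hd⟩).isLt
  simp only [Ne, Fin.ext_iff] at h1 h2 h3
  omega

/-- shape lemma: two distinct adjacent-in-`K_e` edges form a triangle. -/
lemma aux_shape (G : SimpleGraph V)
    (h : ∀ v : V, (G.induce (G.neighborSet v)).Colorable 2)
    {e f : Sym2 V} (he : e ∈ G.edgeSet) (hf : f ∈ G.edgeSet) (hne : e ≠ f)
    (hcl : G.IsClique {v | v ∈ e ∨ v ∈ f}) :
    ∃ x y z : V, y ≠ z ∧ e = s(x, y) ∧ f = s(x, z) ∧
      G.Adj x y ∧ G.Adj x z ∧ G.Adj y z := by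
  induction e using Sym2.inductionOn with
  | hf a b =>
  induction f using Sym2.inductionOn with
  | hf c d =>
  rw [SimpleGraph.mem_edgeSet] at he hf
  have ha : a ∈ ({v | v ∈ s(a,b) ∨ v ∈ s(c,d)} : Set V) := Or.inl (Sym2.mem_mk_left a b)
  have hb : b ∈ ({v | v ∈ s(a,b) ∨ v ∈ s(c,d)} : Set V) := Or.inl (Sym2.mem_mk_right a b)
  have hc : c ∈ ({v | v ∈ s(a,b) ∨ v ∈ s(c,d)} : Set V) := Or.inr (Sym2.mem_mk_left c d)
  have hd : d ∈ ({v | v ∈ s(a,b) ∨ v ∈ s(c,d)} : Set V) := Or.inr (Sym2.mem_mk_right c d)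
  by_cases hac : a = c
  · subst hac
    have hbd : b ≠ d := by rintro rfl; exact hne rfl
    exact ⟨a, b, d, hbd, rfl, rfl, he, hf, hcl hb hd hbd⟩
  by_cases had : a = d
  · subst had
    have hbc : b ≠ c := by
      rintro rfl; exact hne (Sym2.eq_swap)
    exact ⟨a, b, c, hbc, rfl, Sym2.eq_swap, he, hf.symm, hcl hb hc hbc⟩
  by_cases hbc : b = c
  · subst hbc
    have had2 : a ≠ d := had
    exact ⟨b, a, d, had2, Sym2.eq_swap, rfl, he.symm, hf, hcl ha hd had2⟩
  by_cases hbd : b = d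
  · subst hbd
    exact ⟨b, a, c, hac, Sym2.eq_swap, Sym2.eq_swap, he.symm, hf.symm, hcl ha hc hac⟩
  -- all four distinct: K4, contradiction
  exact (aux_noK4 G h (hcl hb hc hbc) (hcl hb hd hbd) hf he (hcl ha hc hac) (hcl ha hd had)).elim

lemma aux_third (G : SimpleGraph V)
    (h : ∀ v : V, (G.induce (G.neighborSet v)).Colorable 2)
    {x y z : V} (hyz : y ≠ z) (hxy : G.Adj x y) (hxz : G.Adj x z) (hadj : G.Adj y z)
    {g : Sym2 V} (hg : g ∈ G.edgeSet)
    (hge : g ≠ s(x, y)) (hgf : g ≠ s(x, z))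
    (hcl1 : G.IsClique {v | v ∈ (s(x, y) : Sym2 V) ∨ v ∈ g})
    (hcl2 : G.IsClique {v | v ∈ (s(x, z) : Sym2 V) ∨ v ∈ g}) :
    g = s(y, z) := by
  induction g using Sym2.inductionOn with
  | hf p q =>
  rw [SimpleGraph.mem_edgeSet] at hg
  have key : ∀ w : V, w ∈ (s(p,q) : Sym2 V) → w = x ∨ w = y ∨ w = z := by
    intro w hw
    by_contra hcon
    push_neg at hcon
    obtain ⟨hwx, hwy, hwz⟩ := hcon
    have hw1 : w ∈ ({v | v ∈ (s(x,y) : Sym2 V) ∨ v ∈ (s(p,q) : Sym2 V)} : Set V) := Or.inr hw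
    have hw2 : w ∈ ({v | v ∈ (s(x,z) : Sym2 V) ∨ v ∈ (s(p,q) : Sym2 V)} : Set V) := Or.inr hw
    have hx1 : x ∈ ({v | v ∈ (s(x,y) : Sym2 V) ∨ v ∈ (s(p,q) : Sym2 V)} : Set V) :=
      Or.inl (Sym2.mem_mk_left x y)
    have hy1 : y ∈ ({v | v ∈ (s(x,y) : Sym2 V) ∨ v ∈ (s(p,q) : Sym2 V)} : Set V) :=
      Or.inl (Sym2.mem_mk_right x y)
    have hz2 : z ∈ ({v | v ∈ (s(x,z) : Sym2 V) ∨ v ∈ (s(p,q) : Sym2 V)} : Set V) :=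
      Or.inl (Sym2.mem_mk_right x z)
    exact aux_noK4 G h hxy hxz hadj (hcl1 hw1 hx1 hwx) (hcl1 hw1 hy1 hwy) (hcl2 hw2 hz2 hwz)
  have hp := key p (Sym2.mem_mk_left p q)
  have hq := key q (Sym2.mem_mk_right p q)
  have hpq : p ≠ q := hg.ne
  rcases hp with rfl | rfl | rfl <;> rcases hq with rfl | rfl | rfl
  · exact absurd rfl hpq
  · exact absurd rfl hge
  · exact absurd rfl hgf
  · exact absurd Sym2.eq_swap hge
  · exact absurd rfl hpq
  · rfl
  · exact absurd Sym2.eq_swap hgf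
  · exact Sym2.eq_swap
  · exact absurd rfl hpq

end Aux

/-- If every open neighborhood in `G` induces a bipartite (2-colorable)
subgraph (i.e. `G` has no odd wheel), then for every vertex `e` of `K_e(G)` the
subgraph of `K_e(G)` induced by the neighborhood of `e` has maximum degree at most 1,
i.e. it is empty or a matching. -/
theorem edgeCliqueGraph_neighborhood_matching {V : Type*} [Fintype V]
    (G : SimpleGraph V)
    (h : ∀ v : V, (G.induce (G.neighborSet v)).Colorable 2)
    (e : G.edgeSet) :
    ∀ f g₁ g₂ : ((ECG.edgeCliqueGraph G).neighborSet e),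
      ((ECG.edgeCliqueGraph G).induce ((ECG.edgeCliqueGraph G).neighborSet e)).Adj f g₁ →
      ((ECG.edgeCliqueGraph G).induce ((ECG.edgeCliqueGraph G).neighborSet e)).Adj f g₂ →
      g₁ = g₂ := by
  intro f g₁ g₂ h1 h2
  obtain ⟨hef_ne, hef_cl⟩ : (ECG.edgeCliqueGraph G).Adj e f := f.2
  obtain ⟨heg1_ne, heg1_cl⟩ : (ECG.edgeCliqueGraph G).Adj e g₁.1 := g₁.2
  obtain ⟨heg2_ne, heg2_cl⟩ : (ECG.edgeCliqueGraph G).Adj e g₂.1 := g₂.2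
  obtain ⟨hfg1_ne, hfg1_cl⟩ : (ECG.edgeCliqueGraph G).Adj f.1 g₁.1 := h1
  obtain ⟨hfg2_ne, hfg2_cl⟩ : (ECG.edgeCliqueGraph G).Adj f.1 g₂.1 := h2
  obtain ⟨x, y, z, hyz, hex, hfx, hxy, hxz, hadj⟩ :=
    aux_shape G h e.2 (f.1 : G.edgeSet).2 (fun hh => hef_ne (Subtype.ext hh)) hef_cl
  have hne_ef : (e : Sym2 V) ≠ ((f : G.edgeSet) : Sym2 V) := fun hh => hef_ne (Subtype.ext hh)
  have hg1 : ((g₁.1 : G.edgeSet) : Sym2 V) = s(y, z) := by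
    apply aux_third G h hyz hxy hxz hadj (g₁.1 : G.edgeSet).2
    · rw [← hex]; exact fun hh => heg1_ne (Subtype.ext hh.symm)
    · rw [← hfx]; exact fun hh => hfg1_ne (Subtype.ext hh.symm)
    · rw [← hex]; exact heg1_cl
    · rw [← hfx]; exact hfg1_cl
  have hg2 : ((g₂.1 : G.edgeSet) : Sym2 V) = s(y, z) := by
    apply aux_third G h hyz hxy hxz hadj (g₂.1 : G.edgeSet).2
    · rw [← hex]; exact fun hh => heg2_ne (Subtype.ext hh.symm)
    · rw [← hfx]; exact fun hh => hfg2_ne (Subtype.ext hh.symm)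
    · rw [← hex]; exact heg2_cl
    · rw [← hfx]; exact hfg2_cl
  exact Subtype.ext (Subtype.ext (hg1.trans hg2.symm))
end

section
/- Let G be a finite connected simple graph with at least two vertices. Then α(G) ≤ α'(G), i.e. the independence number of G is at most the independence number of its edge-clique graph. -/
lemma exists_adj_of_connected {V : Type*} [Nontrivial V] (G : SimpleGraph V)
    (h : G.Connected) (v : V) : ∃ w, G.Adj v w := by
  obtain ⟨w, hw⟩ := exists_ne v
  obtain ⟨p⟩ := h.preconnected v w
  cases p with
  | nil => exact absurd rfl hw
  | cons hadj _ => exact ⟨_, hadj⟩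

/-- For a finite connected simple graph `G` with at least two vertices,
`α(G) ≤ α'(G)`: the independence number of `G` is at most the independence number of
its edge-clique graph. -/
theorem indepNum_le_indepNum_edgeCliqueGraph {V : Type*} [Fintype V] [Nontrivial V]
    (G : SimpleGraph V) (hconn : G.Connected) :
    ECG.indepNum G ≤ ECG.indepNum (ECG.edgeCliqueGraph G) := by
  classical
  haveI : Fintype G.edgeSet := Fintype.ofFinite _
  -- choose an incident edge for each vertex
  have hne : ∀ v : V, ∃ w, G.Adj v w := exists_adj_of_connected G hconn
  set f : V → G.edgeSet := fun v => ⟨s(v, (hne v).choose), (hne v).choose_spec⟩ with hf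
  have hmem : ∀ v : V, v ∈ (f v : Sym2 V) := fun v => Sym2.mem_mk_left _ _
  have hadjmem : ∀ v : V, ∀ u, u ∈ (f v : Sym2 V) → u = v ∨ G.Adj v u := by
    intro v u hu
    rcases Sym2.mem_iff.mp hu with h | h
    · exact Or.inl h
    · exact Or.inr (h ▸ (hne v).choose_spec)
  refine csSup_le ⟨0, ∅, by simp [ECG.IsIndepSet], rfl⟩ ?_
  rintro n ⟨S, hS, rfl⟩
  -- injectivity of f on S
  have hinj : Set.InjOn f S := by
    intro u hu v hv huv
    by_contra hne'
    have h1 : u ∈ (f v : Sym2 V) := huv ▸ hmem u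
    rcases hadjmem v u h1 with h | h
    · exact hne' h
    · exact hS hv hu (Ne.symm hne') h
  have hcard : (S.image f).card = S.card := Finset.card_image_of_injOn hinj
  apply le_csSup
  · refine ⟨Fintype.card G.edgeSet, ?_⟩
    rintro m ⟨T, _, rfl⟩
    exact Finset.card_le_univ T
  · refine ⟨S.image f, ?_, hcard⟩
    intro e he e' he' hee' hadj
    simp only [Finset.coe_image, Set.mem_image, Finset.mem_coe] at he he'
    obtain ⟨u, hu, rfl⟩ := he
    obtain ⟨v, hv, rfl⟩ := he'
    have huv : u ≠ v := fun h => hee' (h ▸ rfl)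
    obtain ⟨-, hcl⟩ := hadj
    have h1 : u ∈ {w | w ∈ ((f u : G.edgeSet) : Sym2 V) ∨ w ∈ ((f v : G.edgeSet) : Sym2 V)} :=
      Or.inl (hmem u)
    have h2 : v ∈ {w | w ∈ ((f u : G.edgeSet) : Sym2 V) ∨ w ∈ ((f v : G.edgeSet) : Sym2 V)} :=
      Or.inr (hmem v)
    exact hS hu hv huv (hcl h1 h2 huv)
end

section
/- Let G be a finite trivially perfect graph (no induced P4 and no induced C4). Then the independence number α(G) equals the number of maximal cliques of G. -/
open SimpleGraph in
private lemma forbidden_config {V : Type*} {G : SimpleGraph V}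
    (hP4 : IsEmpty (SimpleGraph.pathGraph 4 ↪g G))
    (hC4 : IsEmpty (SimpleGraph.cycleGraph 4 ↪g G))
    {y x z w : V} (hyx : G.Adj y x) (hxz : G.Adj x z) (hzw : G.Adj z w)
    (hyz : ¬ G.Adj y z) (hxw : ¬ G.Adj x w)
    (hyz' : y ≠ z) (hxw' : x ≠ w) (hyw' : y ≠ w) : False := by
  have hxy := hyx.symm
  have hzx := hxz.symm
  have hwz := hzw.symm
  have hzy : ¬ G.Adj z y := fun h => hyz h.symm
  have hwx : ¬ G.Adj w x := fun h => hxw h.symm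
  have hyx' : y ≠ x := hyx.ne
  have hxz' : x ≠ z := hxz.ne
  have hzw' : z ≠ w := hzw.ne
  have hinj : Function.Injective ![y, x, z, w] := by
    intro a b hab
    fin_cases a <;> fin_cases b <;> simp_all
  by_cases hyw : G.Adj y w
  · have hwy := hyw.symm
    refine hC4.elim ⟨⟨![y, x, z, w], hinj⟩, ?_⟩
    intro a b
    fin_cases a <;> fin_cases b <;>
      simp [SimpleGraph.cycleGraph_adj, G.irrefl, hyx, hxy, hxz, hzx, hzw, hwz, hyw, hwy,
        hyz, hzy, hxw, hwx] <;> decide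
  · have hwy : ¬ G.Adj w y := fun h => hyw h.symm
    refine hP4.elim ⟨⟨![y, x, z, w], hinj⟩, ?_⟩
    intro a b
    fin_cases a <;> fin_cases b <;>
      simp [SimpleGraph.pathGraph_adj, G.irrefl, hyx, hxy, hxz, hzx, hzw, hwz,
        hyz, hzy, hxw, hwx, hyw, hwy] <;> decide

/-- For a finite trivially perfect graph `G` (no induced `P₄` and no
induced `C₄`), the independence number `α(G)` equals the number of maximal cliques
of `G`. -/
theorem indepNum_eq_card_maximal_cliques_of_triviallyPerfect {V : Type*} [Fintype V]
    (G : SimpleGraph V)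
    (hP4 : IsEmpty (SimpleGraph.pathGraph 4 ↪g G))
    (hC4 : IsEmpty (SimpleGraph.cycleGraph 4 ↪g G)) :
    ECG.indepNum G =
      {S : Set V | S.Nonempty ∧ G.IsClique S ∧
        ∀ T : Set V, G.IsClique T → S ⊆ T → S = T}.ncard := by
  classical
  set M := {S : Set V | S.Nonempty ∧ G.IsClique S ∧
      ∀ T : Set V, G.IsClique T → S ⊆ T → S = T} with hMdef
  have hMfin : M.Finite := Set.toFinite _
  -- every nonempty clique extends to a maximal clique
  have hext : ∀ C : Set V, G.IsClique C → C.Nonempty → ∃ K ∈ M, C ⊆ K := by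
    intro C hC hCne
    have hfin : {T : Set V | G.IsClique T ∧ C ⊆ T}.Finite := Set.toFinite _
    obtain ⟨K, hK, hKmax⟩ := hfin.exists_maximal ⟨C, hC, subset_rfl⟩
    refine ⟨K, ⟨hCne.mono hK.2, hK.1, ?_⟩, hK.2⟩
    intro T hT hKT
    exact le_antisymm hKT (hKmax ⟨hT, hK.2.trans hKT⟩ hKT)
  -- every maximal clique contains a simplicial vertex whose closed nbhd is the clique
  have hsimp : ∀ K ∈ M, ∃ x ∈ K, ∀ u, G.Adj x u → u ∈ K := by
    rintro K ⟨hKne, hKcl, hKmax⟩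
    obtain ⟨x, hxK, hxmin⟩ := Set.exists_min_image K (fun v => G.degree v) (Set.toFinite _) hKne
    refine ⟨x, hxK, ?_⟩
    by_contra h
    push_neg at h
    obtain ⟨y, hxy, hyK⟩ := h
    -- find z ∈ K not adjacent to y
    have hz : ∃ z ∈ K, ¬ G.Adj y z := by
      by_contra hc
      push_neg at hc
      have hcl : G.IsClique (insert y K) :=
        hKcl.insert (fun b hb _ => hc b hb)
      have := hKmax _ hcl (Set.subset_insert _ _)
      exact hyK (this ▸ Set.mem_insert y K)
    obtain ⟨z, hzK, hyz⟩ := hz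
    have hyz' : y ≠ z := fun h => hyK (h ▸ hzK)
    have hxz' : x ≠ z := by
      rintro rfl; exact hyz hxy.symm
    have hxz : G.Adj x z := hKcl hxK hzK hxz'
    -- find w adjacent to z but not adjacent (nor equal) to x
    have hw : ∃ w, G.Adj z w ∧ w ≠ x ∧ ¬ G.Adj x w := by
      by_contra hc
      push_neg at hc
      have hsub : G.neighborFinset z ⊆
          insert x (G.neighborFinset x) \ {y, z} := by
        intro u hu
        rw [SimpleGraph.mem_neighborFinset] at hu
        have hu1 : u ∈ insert x (G.neighborFinset x) := by
          by_cases hux : u = x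
          · simp [hux]
          · simp [SimpleGraph.mem_neighborFinset, hc u hu hux]
        have huy : u ≠ y := by rintro rfl; exact hyz hu.symm
        have huz : u ≠ z := by rintro rfl; exact G.irrefl hu
        simp [hu1, huy, huz]
      have hyzsub : ({y, z} : Finset V) ⊆ insert x (G.neighborFinset x) := by
        intro u hu
        simp only [Finset.mem_insert, Finset.mem_singleton] at hu
        rcases hu with rfl | rfl
        · simp [SimpleGraph.mem_neighborFinset, hxy]
        · simp [SimpleGraph.mem_neighborFinset, hxz]
      have hcard := Finset.card_le_card hsub
      rw [Finset.card_sdiff_of_subset hyzsub] at hcard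
      have h1 : ({y, z} : Finset V).card = 2 := Finset.card_pair hyz'
      have h2 : (insert x (G.neighborFinset x)).card = G.degree x + 1 := by
        rw [Finset.card_insert_of_notMem (by simp [SimpleGraph.mem_neighborFinset])]
        rfl
      have h3 : (G.neighborFinset z).card = G.degree z := rfl
      have h4 : G.degree x ≤ G.degree z := hxmin z hzK
      have h5 : 1 ≤ G.degree x := by
        have : y ∈ G.neighborFinset x := by simp [SimpleGraph.mem_neighborFinset, hxy]
        have := Finset.card_pos.2 ⟨y, this⟩
        exact this
      rw [h1, h2, h3] at hcard
      omega
    obtain ⟨w, hzw, hwx', hxw⟩ := hw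
    have hyw' : y ≠ w := by rintro rfl; exact hyz hzw.symm
    exact forbidden_config hP4 hC4 hxy.symm hxz hzw hyz hxw hyz' (Ne.symm hwx') hyw'
  -- uniqueness: a maximal clique containing a simplicial vertex of K equals K
  have huniq : ∀ K ∈ M, ∀ x ∈ K, (∀ u, G.Adj x u → u ∈ K) →
      ∀ L ∈ M, x ∈ L → L = K := by
    rintro K hK x hxK hxN L ⟨hLne, hLcl, hLmax⟩ hxL
    have hLK : L ⊆ K := by
      intro u huL
      by_cases h : u = x
      · exact h ▸ hxK
      · exact hxN u (hLcl hxL huL (Ne.symm h))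
    exact hLmax K hK.2.1 hLK
  -- choose simplicial vertices
  choose f hf1 hf2 using hsimp
  set F : Finset (Set V) := hMfin.toFinset with hFdef
  have hFmem : ∀ K : Set V, K ∈ F ↔ K ∈ M := fun K => hMfin.mem_toFinset
  -- the independent set of simplicial vertices
  set S : Finset V := F.attach.image (fun K => f K.1 ((hFmem K.1).1 K.2)) with hSdef
  have hinjf : Function.Injective (fun K : {x // x ∈ F} => f K.1 ((hFmem K.1).1 K.2)) := by
    intro K L hKL
    have hK := (hFmem K.1).1 K.2
    have hL := (hFmem L.1).1 L.2
    have : L.1 = K.1 := by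
      have hx : f K.1 hK ∈ L.1 := by
        have := hf1 L.1 hL
        simp only at hKL
        rw [← hKL] at this
        exact this
      exact huniq K.1 hK _ (hf1 K.1 hK) (hf2 K.1 hK) L.1 hL hx
    exact (Subtype.ext this).symm
  have hScard : S.card = M.ncard := by
    rw [hSdef, Finset.card_image_of_injective _ hinjf, Finset.card_attach,
      Set.ncard_eq_toFinset_card _ hMfin]
  have hSindep : ECG.IsIndepSet G ↑S := by
    intro a ha b hb hab hadj
    simp only [hSdef, Finset.coe_image, Set.mem_image, Finset.mem_coe,
      Finset.mem_attach, true_and] at ha hb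
    obtain ⟨K, _, rfl⟩ := ha
    obtain ⟨L, _, rfl⟩ := hb
    have hK := (hFmem K.1).1 K.2
    have hL := (hFmem L.1).1 L.2
    have hbK : f L.1 hL ∈ K.1 := hf2 K.1 hK _ hadj
    have hKL : K = L := Subtype.ext (huniq L.1 hL _ (hf1 L.1 hL) (hf2 L.1 hL) K.1 hK hbK)
    subst hKL
    exact hab rfl
  -- upper bound: every independent set has at most |M| elements
  have hub : ∀ n ∈ {n | ∃ S : Finset V, ECG.IsIndepSet G ↑S ∧ S.card = n},
      n ≤ M.ncard := by
    rintro n ⟨T, hTind, rfl⟩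
    have hvK : ∀ v : V, ∃ K ∈ M, v ∈ K := by
      intro v
      obtain ⟨K, hK, hsub⟩ := hext {v} (G.isClique_singleton v) ⟨v, rfl⟩
      exact ⟨K, hK, hsub rfl⟩
    choose g hg1 hg2 using hvK
    rw [Set.ncard_eq_toFinset_card _ hMfin]
    refine Finset.card_le_card_of_injOn g (fun v _ => hMfin.mem_toFinset.2 (hg1 v)) ?_
    intro u hu v hv huv
    by_contra hne
    have hcl := (hg1 v).2.1
    have hu' : u ∈ g v := huv ▸ hg2 u
    exact hTind hu hv hne (hcl hu' (hg2 v) hne)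
  refine le_antisymm (csSup_le ⟨0, ∅, ?_, rfl⟩ hub) (le_csSup ⟨M.ncard, hub⟩ ⟨S, hSindep, hScard⟩)
  simp [ECG.IsIndepSet]
end
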